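/- arXiv:2111.08911 — 8 statements merged into one kernel-verified Lean document; each statement's English description precedes it below -/
import Mathlib

section
/- Let P be a probability distribution supported on [0,1] and let Λ be a positive integer with α_λ := 2^{-λ}. If E_{Z∼P}[Z] > α for some α ∈ [2·2^{-Λ}, 1], then there exists λ ∈ {1,...,Λ} such that P(Z > 2^{-λ}) > α/(4Λ·2^{-λ}). -/
open MeasureTheory

/-- If a probability measure `P` supported on `[0,1]` has mean `> α` for some
`α ∈ [2·2^{-Λ}, 1]`, then for some `λ ∈ {1,…,Λ}` we have `P(Z > 2^{-λ}) > α/(4Λ·2^{-λ})`. -/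
theorem stmt0 (P : Measure ℝ) [IsProbabilityMeasure P]
    (hsupp : P (Set.Icc (0:ℝ) 1)ᶜ = 0)
    (Λ : ℕ) (hΛ : 1 ≤ Λ) (α : ℝ)
    (hα : α ∈ Set.Icc (2 * ((2:ℝ) ^ Λ)⁻¹) 1)
    (hE : α < ∫ z, z ∂P) :
    ∃ l ∈ Finset.Icc 1 Λ,
      α / (4 * Λ * ((2:ℝ) ^ l)⁻¹) < (P {z : ℝ | ((2:ℝ) ^ l)⁻¹ < z}).toReal := by
  by_contra hcon
  push_neg at hcon
  have hset : ∀ l : ℕ, {z : ℝ | ((2:ℝ) ^ l)⁻¹ < z} = Set.Ioi (((2:ℝ) ^ l)⁻¹) := fun l => rfl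
  set g : ℝ → ℝ := fun z => ((2:ℝ)^Λ)⁻¹ +
      ∑ l ∈ Finset.Icc 1 Λ, ((2:ℝ)^(l-1))⁻¹ * Set.indicator (Set.Ioi (((2:ℝ)^l)⁻¹)) 1 z
      with hg
  have hmem : ∀ᵐ z ∂P, z ∈ Set.Icc (0:ℝ) 1 := by
    rw [ae_iff]
    exact hsupp
  have hle : ∀ᵐ z ∂P, z ≤ g z := by
    filter_upwards [hmem] with z hz
    obtain ⟨hz0, hz1⟩ := hz
    by_cases hzs : z ≤ ((2:ℝ)^Λ)⁻¹
    · refine hzs.trans ?_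
      simp only [hg, le_add_iff_nonneg_right]
      refine Finset.sum_nonneg fun l _ => mul_nonneg (by positivity) ?_
      exact Set.indicator_nonneg (fun _ _ => zero_le_one) z
    · push_neg at hzs
      have hex : ∃ n, ((2:ℝ)^n)⁻¹ < z := ⟨Λ, hzs⟩
      set l := Nat.find hex with hl
      have hlspec : ((2:ℝ)^l)⁻¹ < z := Nat.find_spec hex
      have hl1 : 1 ≤ l := by
        by_contra h0
        have : l = 0 := by omega
        rw [this] at hlspec
        simp at hlspec
        linarith
      have hlΛ : l ≤ Λ := Nat.find_le hzs
      have hmin : z ≤ ((2:ℝ)^(l-1))⁻¹ := by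
        have := Nat.find_min hex (show l - 1 < l by omega)
        push_neg at this
        exact this
      refine hmin.trans ?_
      have hterm : ((2:ℝ)^(l-1))⁻¹ * Set.indicator (Set.Ioi (((2:ℝ)^l)⁻¹)) 1 z
          = ((2:ℝ)^(l-1))⁻¹ := by
        rw [Set.indicator_of_mem (show z ∈ Set.Ioi (((2:ℝ)^l)⁻¹) from hlspec)]
        simp
      calc ((2:ℝ)^(l-1))⁻¹
          = ((2:ℝ)^(l-1))⁻¹ * Set.indicator (Set.Ioi (((2:ℝ)^l)⁻¹)) 1 z := hterm.symm
        _ ≤ ∑ k ∈ Finset.Icc 1 Λ, ((2:ℝ)^(k-1))⁻¹ * Set.indicator (Set.Ioi (((2:ℝ)^k)⁻¹)) 1 z := by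
            refine Finset.single_le_sum (f := fun k => ((2:ℝ)^(k-1))⁻¹ *
                Set.indicator (Set.Ioi (((2:ℝ)^k)⁻¹)) 1 z)
              (fun k _ => mul_nonneg (by positivity)
                (Set.indicator_nonneg (fun _ _ => zero_le_one) z)) ?_
            simp [Finset.mem_Icc, hl1, hlΛ]
        _ ≤ g z := by
            simp only [hg, le_add_iff_nonneg_left]
            positivity
  have hintid : Integrable (fun z : ℝ => z) P := by
    refine Integrable.mono' (integrable_const (1:ℝ)) measurable_id.aestronglyMeasurable ?_
    filter_upwards [hmem] with z hz
    rw [Real.norm_eq_abs, abs_le]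
    exact ⟨by linarith [hz.1], hz.2⟩
  have hintsum : Integrable (fun z => ∑ l ∈ Finset.Icc 1 Λ,
      ((2:ℝ)^(l-1))⁻¹ * Set.indicator (Set.Ioi (((2:ℝ)^l)⁻¹)) 1 z) P := by
    apply integrable_finset_sum
    intro l _
    apply Integrable.const_mul
    rw [integrable_indicator_iff measurableSet_Ioi]
    exact (integrable_const _).integrableOn
  have hintg : Integrable g P := (integrable_const _).add hintsum
  have hΛ0 : (0:ℝ) < (Λ:ℝ) := by exact_mod_cast Nat.pos_of_ne_zero (by omega)
  have hIg : ∫ z, g z ∂P = ((2:ℝ)^Λ)⁻¹ +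
      ∑ l ∈ Finset.Icc 1 Λ, ((2:ℝ)^(l-1))⁻¹ * (P (Set.Ioi (((2:ℝ)^l)⁻¹))).toReal := by
    rw [hg, integral_add (integrable_const _) hintsum, integral_const]
    simp only [measure_univ, ENNReal.toReal_one, one_smul, probReal_univ]
    congr 1
    rw [integral_finset_sum]
    · refine Finset.sum_congr rfl fun l _ => ?_
      rw [integral_const_mul, integral_indicator_one measurableSet_Ioi, Measure.real]
    · intro l _
      apply Integrable.const_mul
      rw [integrable_indicator_iff measurableSet_Ioi]
      exact (integrable_const _).integrableOn
  have hPle : ∀ l ∈ Finset.Icc 1 Λ,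
      ((2:ℝ)^(l-1))⁻¹ * (P (Set.Ioi (((2:ℝ)^l)⁻¹))).toReal ≤ α / (2*Λ) := by
    intro l hl
    have hl1 : 1 ≤ l := (Finset.mem_Icc.mp hl).1
    have h := hcon l hl
    rw [hset l] at h
    have hpow : (2:ℝ)^l = 2^(l-1) * 2 := by
      rw [← pow_succ]
      congr 1
      omega
    have key : ((2:ℝ)^(l-1))⁻¹ * (α / (4 * Λ * ((2:ℝ)^l)⁻¹)) = α / (2*Λ) := by
      have h1 : (0:ℝ) < (2:ℝ)^(l-1) := by positivity
      rw [hpow]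
      field_simp
      ring
    calc ((2:ℝ)^(l-1))⁻¹ * (P (Set.Ioi (((2:ℝ)^l)⁻¹))).toReal
        ≤ ((2:ℝ)^(l-1))⁻¹ * (α / (4 * Λ * ((2:ℝ)^l)⁻¹)) :=
          mul_le_mul_of_nonneg_left h (by positivity)
      _ = α / (2*Λ) := key
  have hsum : ∑ l ∈ Finset.Icc 1 Λ, ((2:ℝ)^(l-1))⁻¹ * (P (Set.Ioi (((2:ℝ)^l)⁻¹))).toReal
      ≤ α / 2 := by
    calc ∑ l ∈ Finset.Icc 1 Λ, ((2:ℝ)^(l-1))⁻¹ * (P (Set.Ioi (((2:ℝ)^l)⁻¹))).toReal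
        ≤ (Finset.Icc 1 Λ).card • (α / (2*Λ)) := Finset.sum_le_card_nsmul _ _ _ hPle
      _ = (Λ:ℝ) * (α / (2*Λ)) := by
          rw [Nat.card_Icc]
          simp [nsmul_eq_mul]
      _ = α / 2 := by field_simp
  have hαΛ : ((2:ℝ)^Λ)⁻¹ ≤ α / 2 := by linarith [hα.1]
  have : ∫ z, z ∂P ≤ α := by
    calc ∫ z, z ∂P ≤ ∫ z, g z ∂P := integral_mono_ae hintid hintg hle
      _ = ((2:ℝ)^Λ)⁻¹ +
          ∑ l ∈ Finset.Icc 1 Λ, ((2:ℝ)^(l-1))⁻¹ * (P (Set.Ioi (((2:ℝ)^l)⁻¹))).toReal := hIg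
      _ ≤ α / 2 + α / 2 := add_le_add hαΛ hsum
      _ = α := by ring
  linarith
end

section
/- Fix a weighted subclass collection T = [G, w] with Λ levels. For any x ∈ X, the truncated error of T at (x, Vote(T,x)) is at most twice the minimum over y ∈ [0,1] of the truncated error of T at (x,y): Σ_v P_w(v)·Terr(G^v_{1:Λ}, x, Vote(T,x)) ≤ 2·min_{y∈[0,1]} Σ_v P_w(v)·Terr(G^v_{1:Λ}, x, y). -/
/-- abstract form of Lemma mean-2approx: given a finite family of pairs
`(a i, c i) ∈ [0,1]×[0,1]` with nonnegative weights `p i` summing to `1`, and letting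
`y₁ = Σ p i · a i` be the weighted mean, the weighted truncated error
`Σ p i · max(|a i − y₁|, c i)` is at most twice the minimum over `y ∈ [0,1]` of
`Σ p i · max(|a i − y|, c i)`. -/
theorem stmt2 {ι : Type*} (s : Finset ι) (p a c : ι → ℝ)
    (hp : ∀ i ∈ s, 0 ≤ p i) (hsum : ∑ i ∈ s, p i = 1)
    (ha : ∀ i ∈ s, a i ∈ Set.Icc (0:ℝ) 1) (hc : ∀ i ∈ s, c i ∈ Set.Icc (0:ℝ) 1) :
    ∀ y ∈ Set.Icc (0:ℝ) 1,
      ∑ i ∈ s, p i * max |a i - (∑ j ∈ s, p j * a j)| (c i)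
        ≤ 2 * ∑ i ∈ s, p i * max |a i - y| (c i) := by
  intro y _
  set y₁ := ∑ j ∈ s, p j * a j with hy₁
  set M := ∑ i ∈ s, p i * max |a i - y| (c i) with hM
  have hdist : |y₁ - y| ≤ M := by
    have h1 : y₁ - y = ∑ i ∈ s, p i * (a i - y) := by
      simp only [hy₁, mul_sub, Finset.sum_sub_distrib, ← Finset.sum_mul, hsum, one_mul]
    calc |y₁ - y| = |∑ i ∈ s, p i * (a i - y)| := by rw [h1]
      _ ≤ ∑ i ∈ s, |p i * (a i - y)| := Finset.abs_sum_le_sum_abs _ _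
      _ ≤ M := by
          apply Finset.sum_le_sum
          intro i hi
          rw [abs_mul, abs_of_nonneg (hp i hi)]
          exact mul_le_mul_of_nonneg_left (le_max_left _ _) (hp i hi)
  have key : ∑ i ∈ s, p i * max |a i - y₁| (c i) ≤ M + |y₁ - y| := by
    have : ∑ i ∈ s, p i * max |a i - y₁| (c i)
        ≤ ∑ i ∈ s, p i * (max |a i - y| (c i) + |y₁ - y|) := by
      apply Finset.sum_le_sum
      intro i hi
      apply mul_le_mul_of_nonneg_left _ (hp i hi)
      apply max_le
      · calc |a i - y₁| ≤ |a i - y| + |y - y₁| := abs_sub_le _ _ _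
          _ ≤ max |a i - y| (c i) + |y₁ - y| := by
              rw [abs_sub_comm y y₁]; gcongr; exact le_max_left _ _
      · have : c i ≤ max |a i - y| (c i) := le_max_right _ _
        have h0 : (0:ℝ) ≤ |y₁ - y| := abs_nonneg _
        linarith
    calc ∑ i ∈ s, p i * max |a i - y₁| (c i)
        ≤ ∑ i ∈ s, p i * (max |a i - y| (c i) + |y₁ - y|) := this
      _ = M + (∑ i ∈ s, p i) * |y₁ - y| := by
          rw [hM, Finset.sum_mul, ← Finset.sum_add_distrib]
          congr 1; ext i; ring
      _ = M + |y₁ - y| := by rw [hsum, one_mul]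
  linarith
end

section
/- Suppose a class F ⊆ [0,1]^X contains d thresholds with margin α and tightness β (with α > 2β > 0). Then sfat_{α−2β}(F) ≥ ⌊log₂ d⌋. -/
/-- The node of a binary tree at depth `t` along the sign path `ε` is indexed by the
prefix `(ε 0, …, ε (t-1))`. -/
def pathPrefix (ε : ℕ → Bool) (t : ℕ) : List Bool := List.ofFn (fun i : Fin t => ε i)

/-- The pair of trees `(x, s)` of depth `d` is `α`-shattered by `F`: for every sign
pattern `ε` there is `f ∈ F` achieving margin `α/2` with the prescribed sign at every
node along the path `ε`. -/
def Shatters {Z : Type*} (F : Set (Z → ℝ)) (α : ℝ) (d : ℕ)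
    (x : List Bool → Z) (s : List Bool → ℝ) : Prop :=
  ∀ ε : ℕ → Bool, ∃ f ∈ F, ∀ t < d,
    (if ε t then f (x (pathPrefix ε t)) - s (pathPrefix ε t)
      else s (pathPrefix ε t) - f (x (pathPrefix ε t))) ≥ α / 2

/-- `F` `α`-shatters some pair of trees of depth `d`. -/
def IsShattered {Z : Type*} (F : Set (Z → ℝ)) (α : ℝ) (d : ℕ) : Prop :=
  ∃ x s, Shatters F α d x s

/-- The sequential fat-shattering dimension of `F` at scale `α`: the largest depth `d`
(possibly `⊤`) such that some pair of trees of depth `d` is `α`-shattered by `F`. -/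
noncomputable def sfat {Z : Type*} (F : Set (Z → ℝ)) (α : ℝ) : ℕ∞ :=
  sSup {n : ℕ∞ | ∃ d : ℕ, n = (d : ℕ∞) ∧ IsShattered F α d}

/-- `F` contains `m` thresholds with margin `γ` and tightness `β`: there are points
`x_1,…,x_m`, hypotheses `f_1,…,f_m ∈ F` and values `u, u' ∈ [0,1]` with `|u − u'| ≥ γ`,
such that `|f_i(x_j) − u| ≤ β` for `i ≤ j` and `|f_i(x_j) − u'| ≤ β` for `i > j`. -/
def Lfun (m : ℕ) (ε : ℕ → Bool) (t : ℕ) : ℕ :=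
  ∑ k ∈ Finset.range t, if ε k then 0 else 2^(m-1-k)

lemma Lfun_succ (m : ℕ) (ε : ℕ → Bool) (t : ℕ) :
    Lfun m ε (t+1) = Lfun m ε t + (if ε t then 0 else 2^(m-1-t)) :=
  Finset.sum_range_succ _ _

lemma Lfun_mono (m : ℕ) (ε : ℕ → Bool) {t s : ℕ} (h : t ≤ s) :
    Lfun m ε t ≤ Lfun m ε s :=
  Finset.sum_le_sum_of_subset (Finset.range_subset_range.mpr h)

lemma Lfun_bound (m : ℕ) (ε : ℕ → Bool) {t s : ℕ} (hts : t ≤ s) (hsm : s ≤ m) :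
    Lfun m ε s + 2^(m-s) ≤ Lfun m ε t + 2^(m-t) := by
  induction s, hts using Nat.le_induction with
  | base => exact le_refl _
  | succ s hts ih =>
    have hsm' : s ≤ m := by omega
    have h1 : Lfun m ε (s+1) ≤ Lfun m ε s + 2^(m-1-s) := by
      rw [Lfun_succ]; split <;> simp
    have h2 : 2^(m-1-s) + 2^(m-(s+1)) ≤ 2^(m-s) := by
      have : m - 1 - s = m - (s+1) := by omega
      rw [this]
      have : m - s = (m - (s+1)) + 1 := by omega
      rw [this, pow_succ]; omega
    have := ih hsm'
    omega

lemma Lfun_congr (m : ℕ) {ε ε' : ℕ → Bool} (t : ℕ) (h : ∀ k < t, ε k = ε' k) :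
    Lfun m ε t = Lfun m ε' t := by
  unfold Lfun
  exact Finset.sum_congr rfl fun k hk => by rw [h k (Finset.mem_range.mp hk)]

lemma key {X : Type*} (F : Set (X → ℝ)) (m : ℕ) (pts : ℕ → X) (f : ℕ → X → ℝ)
    (γ β u u' : ℝ)
    (hf : ∀ i < 2^m, f i ∈ F)
    (hgap : γ + 2*β ≤ u - u')
    (hij : ∀ i j, i < 2^m → j + 1 < 2^m → i ≤ j → |f i (pts j) - u| ≤ β)
    (hji : ∀ i j, i < 2^m → j + 1 < 2^m → j < i → |f i (pts j) - u'| ≤ β) :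
    IsShattered F γ m := by
  refine ⟨fun p => pts (Lfun m (fun k => p.getD k false) p.length + 2^(m-1-p.length) - 1),
    fun _ => (u+u')/2, fun ε => ?_⟩
  set i := Lfun m ε m with hi
  have him : i + 2^(m-m) ≤ 0 + 2^(m-0) := Lfun_bound m ε (Nat.zero_le m) le_rfl
  simp only [Nat.sub_self, pow_zero, Nat.sub_zero, zero_add] at him
  have hilt : i < 2^m := by omega
  refine ⟨f i, hf i hilt, fun t ht => ?_⟩
  -- identify the node index
  have hxeq : (pathPrefix ε t).length = t := by simp [pathPrefix]
  have hLeq : Lfun m (fun k => (pathPrefix ε t).getD k false) (pathPrefix ε t).length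
      = Lfun m ε t := by
    rw [hxeq]
    refine Lfun_congr m t fun k hk => ?_
    simp [pathPrefix, List.getD_eq_getElem?_getD, List.getElem?_ofFn, hk]
  set J := Lfun m ε t + 2^(m-1-t) - 1 with hJ
  rw [hxeq] at hLeq
  have hx : (fun p => pts (Lfun m (fun k => p.getD k false) p.length + 2^(m-1-p.length) - 1))
      (pathPrefix ε t) = pts J := by
    simp only [hxeq]; rw [hLeq]
  have hpos : (1:ℕ) ≤ 2^(m-1-t) := Nat.one_le_two_pow
  have hbt : Lfun m ε t + 2^(m-t) ≤ 2^m := by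
    have := Lfun_bound m ε (Nat.zero_le t) (le_of_lt ht)
    simpa [Lfun] using this
  have hhalf : 2^(m-1-t) < 2^(m-t) := by
    have : m - t = (m - 1 - t) + 1 := by omega
    rw [this, pow_succ]
    have : (1:ℕ) ≤ 2^(m-1-t) := Nat.one_le_two_pow
    omega
  have hJlt : J + 1 < 2^m := by omega
  cases hεt : ε t
  · -- ε t = false : i > J
    have hstep : Lfun m ε (t+1) = Lfun m ε t + 2^(m-1-t) := by
      rw [Lfun_succ, hεt]; simp
    have : Lfun m ε (t+1) ≤ i := Lfun_mono m ε (by omega)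
    have hJi : J < i := by omega
    have hb := hji i J hilt hJlt hJi
    rw [hxeq] at *
    simp only [hεt, if_false, hx]
    have h1 : f i (pts J) ≤ u' + β := by
      have := abs_le.mp hb; linarith [this.2]
    change (u+u')/2 - f i (pts J) ≥ γ/2
    linarith
  · -- ε t = true : i ≤ J
    have hstep : Lfun m ε (t+1) = Lfun m ε t := by
      rw [Lfun_succ, hεt]; simp
    have hb2 : i + 1 ≤ Lfun m ε (t+1) + 2^(m-(t+1)) := by
      have := Lfun_bound m ε (show t+1 ≤ m by omega) le_rfl
      simpa using this
    have hke : (2:ℕ)^(m-(t+1)) = 2^(m-1-t) := by congr 1; omega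
    have hJi : i ≤ J := by omega
    have hb := hij i J hilt hJlt hJi
    simp only [hεt, if_true, hx]
    have h1 : u - β ≤ f i (pts J) := by
      have := abs_le.mp hb; linarith [this.1]
    change f i (pts J) - (u+u')/2 ≥ γ/2
    linarith


def HasThresholds {X : Type*} (F : Set (X → ℝ)) (m : ℕ) (γ β : ℝ) : Prop :=
  ∃ (x : Fin m → X) (f : Fin m → X → ℝ) (u u' : ℝ),
    (∀ i, f i ∈ F) ∧ u ∈ Set.Icc (0:ℝ) 1 ∧ u' ∈ Set.Icc (0:ℝ) 1 ∧ γ ≤ |u - u'| ∧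
    (∀ i j : Fin m, i ≤ j → |f i (x j) - u| ≤ β) ∧
    (∀ i j : Fin m, j < i → |f i (x j) - u'| ≤ β)

/-- if `F ⊆ [0,1]^X` contains `d` thresholds with margin `α` and tightness
`β` (where `α > 2β > 0`), then `sfat_{α−2β}(F) ≥ ⌊log₂ d⌋`. -/
theorem stmt5 {X : Type*} (F : Set (X → ℝ))
    (hF : ∀ f ∈ F, ∀ x, f x ∈ Set.Icc (0:ℝ) 1)
    (d : ℕ) (α β : ℝ) (hβ : 0 < β) (hαβ : 2 * β < α)
    (h : HasThresholds F d α β) :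
    (Nat.log 2 d : ℕ∞) ≤ sfat F (α - 2 * β) := by
  obtain ⟨x, f, u, u', hfF, hu, hu', hgap, hij, hji⟩ := h
  rcases Nat.eq_zero_or_pos d with hd | hd
  · subst hd
    simp [Nat.log_zero_right]
  set m := Nat.log 2 d with hmdef
  have hm : 2^m ≤ d := Nat.pow_log_le_self 2 (by omega)
  suffices hs : IsShattered F (α - 2*β) m by
    exact le_sSup ⟨m, rfl, hs⟩
  have hd1 : ∀ k, k < 2^m → min k (d-1) < d := fun k hk => by omega
  set emb : ℕ → Fin d := fun k => ⟨min k (d-1), by omega⟩ with hemb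
  have hembv : ∀ k < 2^m, (emb k : ℕ) = k := fun k hk => by
    simp only [hemb]; omega
  rcases le_or_gt u' u with hle | hlt
  · have habs : α ≤ u - u' := by
      rw [abs_of_nonneg (by linarith)] at hgap; exact hgap
    refine key F m (fun k => x (emb k)) (fun k => f (emb k)) (α - 2*β) β u u'
      (fun i _ => hfF (emb i)) (by linarith) ?_ ?_
    · intro i j hi hj hijle
      refine hij (emb i) (emb j) ?_
      show (emb i : ℕ) ≤ emb j
      rw [hembv i hi, hembv j (by omega)]; exact hijle
    · intro i j hi hj hjilt
      refine hji (emb i) (emb j) ?_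
      show (emb j : ℕ) < emb i
      rw [hembv i hi, hembv j (by omega)]; exact hjilt
  · have habs : α ≤ u' - u := by
      rw [abs_of_nonpos (by linarith)] at hgap; linarith
    refine key F m (fun k => x (emb (2^m-2-k))) (fun k => f (emb (2^m-1-k))) (α - 2*β) β u' u
      (fun i _ => hfF (emb (2^m-1-i))) (by linarith) ?_ ?_
    · intro i j hi hj hijle
      refine hji (emb (2^m-1-i)) (emb (2^m-2-j)) ?_
      show (emb (2^m-2-j) : ℕ) < emb (2^m-1-i)
      rw [hembv _ (by omega), hembv _ (by omega)]; omega
    · intro i j hi hj hjilt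
      refine hij (emb (2^m-1-i)) (emb (2^m-2-j)) ?_
      show (emb (2^m-1-i) : ℕ) ≤ emb (2^m-2-j)
      rw [hembv _ (by omega), hembv _ (by omega)]; omega
end

section
/- For any class F ⊆ [0,1]^X and α > 0: for all α' ≥ 4α, the α-augmented class F^α satisfies sfat_{α'}(F^α) ≤ sfat_{α'/2}(F). -/
/-- The `α`-augmented class: all `[0,1]`-valued functions within uniform distance `α`
of some member of `F`. -/
def augClass {X : Type*} (F : Set (X → ℝ)) (α : ℝ) : Set (X → ℝ) :=
  {f' | (∀ x, f' x ∈ Set.Icc (0:ℝ) 1) ∧ ∃ f ∈ F, ∀ x, |f' x - f x| ≤ α}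

/-- for any `α > 0` and any `α' ≥ 4α`, `sfat_{α'}(F^α) ≤ sfat_{α'/2}(F)`. -/
theorem stmt6 {X : Type*} (F : Set (X → ℝ)) (α : ℝ) (hα : 0 < α)
    (α' : ℝ) (hα' : 4 * α ≤ α') :
    sfat (augClass F α) α' ≤ sfat F (α' / 2) := by
  apply sSup_le_sSup
  rintro n ⟨d, rfl, x, s, hsh⟩
  refine ⟨d, rfl, x, s, fun ε => ?_⟩
  obtain ⟨f', ⟨_, f, hf, hclose⟩, hmar⟩ := hsh ε
  refine ⟨f, hf, fun t ht => ?_⟩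
  have := hmar t ht
  have h1 := hclose (x (pathPrefix ε t))
  have h2 := abs_le.mp h1
  cases hε : ε t <;> simp [hε] at this ⊢ <;> nlinarith [h2.1, h2.2]
end

section
/- Suppose a Z-valued tree z of depth d is α-shattered by a class F ⊆ ℝ^Z. Then any sequential β-cover of F on z with β < α/2 has size at least 2^d; that is, N_∞(F, z, β) ≥ 2^d. -/
/-- if a `Z`-valued tree `z` of depth `d` is `α`-shattered by `F` (witnessed
by `s`), then any sequential `β`-cover `V` of `F` on `z` with `β < α/2` has at least `2^d`
elements; i.e. `N_∞(F, z, β) ≥ 2^d`. -/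
theorem stmt8 {Z : Type*} (F : Set (Z → ℝ)) (d : ℕ) (α β : ℝ) (hβ : β < α / 2)
    (z : List Bool → Z) (s : List Bool → ℝ) (hshat : Shatters F α d z s)
    (V : Finset (List Bool → ℝ))
    (hcover : ∀ f ∈ F, ∀ ε : ℕ → Bool, ∃ v ∈ V, ∀ t < d,
      |v (pathPrefix ε t) - f (z (pathPrefix ε t))| ≤ β) :
    2 ^ d ≤ V.card := by
  classical
  choose f hfF hf using hshat
  choose v hvV hv using fun ε => hcover (f ε) (hfF ε) ε
  set ext : (Fin d → Bool) → (ℕ → Bool) :=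
    fun e t => if h : t < d then e ⟨t, h⟩ else false with hext
  have hinj : Function.Injective (fun e : Fin d → Bool => v (ext e)) := by
    intro e e' hvv
    by_contra hne
    have hexists : ∃ t : ℕ, t < d ∧ ext e t ≠ ext e' t := by
      by_contra hall
      push_neg at hall
      apply hne
      funext i
      have := hall i i.2
      simpa [hext, i.2] using this
    set t := Nat.find hexists with htdef
    obtain ⟨ht₀d, ht₀ne⟩ := Nat.find_spec hexists
    have hmin : ∀ i < t, ext e i = ext e' i := by
      intro i hi
      have := Nat.find_min hexists hi
      push_neg at this
      by_cases hid : i < d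
      · exact this hid
      · simp [hext, hid]
    have hpre : pathPrefix (ext e') t = pathPrefix (ext e) t := by
      unfold pathPrefix
      congr 1
      funext i
      exact (hmin i i.2).symm
    have h1 := hf (ext e) t ht₀d
    have h2 := hf (ext e') t ht₀d
    have hv1 := hv (ext e) t ht₀d
    have hv2 := hv (ext e') t ht₀d
    rw [hpre] at h2 hv2
    have hvveq : v (ext e) (pathPrefix (ext e) t) = v (ext e') (pathPrefix (ext e) t) :=
      congrFun hvv _
    have habs1 := abs_le.mp hv1
    have habs2 := abs_le.mp hv2
    cases hb : ext e t with
    | true =>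
      have hb' : ext e' t = false := by
        cases h : ext e' t
        · rfl
        · exact absurd (hb.trans h.symm) ht₀ne
      rw [hb, if_pos rfl] at h1
      rw [hb'] at h2
      simp only [Bool.false_eq_true, if_false] at h2
      linarith [habs1.1, habs1.2, habs2.1, habs2.2]
    | false =>
      have hb' : ext e' t = true := by
        cases h : ext e' t
        · exact absurd (hb.trans h.symm) ht₀ne
        · rfl
      rw [hb] at h1
      simp only [Bool.false_eq_true, if_false] at h1
      rw [hb', if_pos rfl] at h2
      linarith [habs1.1, habs1.2, habs2.1, habs2.2]
  calc 2 ^ d = (Finset.univ.image (fun e : Fin d → Bool => v (ext e))).card := by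
        rw [Finset.card_image_of_injective _ hinj, Finset.card_univ]
        simp [Fintype.card_fun]
    _ ≤ V.card := by
        apply Finset.card_le_card
        intro w hw
        simp only [Finset.mem_image] at hw
        obtain ⟨e, _, rfl⟩ := hw
        exact hvV (ext e)
end

section
/- Fix a weighted subclass collection T = [G, w] and a point (x,y) ∈ X × [0,1]. If (x,y) ∈ Highvote(T, α) for some α ≥ 0, then for every λ ∈ [Λ]: (Σ_{v_λ} w_λ^{v_λ}·1[|SOA_{α_λ}(G_λ^{v_λ})(x) − y| > 5α_λ]) / (Σ_{u_λ} w_λ^{u_λ}) ≤ α/α_λ. -/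
/-- The `α`-restriction of `F` to `(x,y)`: those `f ∈ F` with `⌊y/α⌋ = ⌊f x/α⌋`. -/
def restrictAt {X : Type*} (F : Set (X → ℝ)) (α : ℝ) (x : X) (y : ℝ) : Set (X → ℝ) :=
  {f ∈ F | ⌊y / α⌋ = ⌊f x / α⌋}

open Classical in
/-- The smallest bucket index `j* < ⌊1/α⌋+1` maximizing `sfat_α(F|^α_{(x, jα)})`. -/
noncomputable def soaIdx {X : Type*} (F : Set (X → ℝ)) (α : ℝ) (x : X) : ℕ :=
  if h : ∃ j, j < ⌊1/α⌋₊ + 1 ∧ ∀ j' < ⌊1/α⌋₊ + 1,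
      sfat (restrictAt F α x ((j' : ℝ) * α)) α ≤ sfat (restrictAt F α x ((j : ℝ) * α)) α
  then Nat.find h else 0

/-- The SOA hypothesis for `F` at scale `α`: `SOA_α(F)(x) := (j* + 1)·α`. -/
noncomputable def soa {X : Type*} (F : Set (X → ℝ)) (α : ℝ) (x : X) : ℝ :=
  ((soaIdx F α x : ℝ) + 1) * α

open Classical in
/-- The cutoff point of the hierarchical aggregation rule. -/
noncomputable def cutoff (Λ : ℕ) (g : ℕ → ℝ) : ℕ :=
  if h : ∃ l, (1 ≤ l ∧ l < Λ) ∧ 2 * ((2:ℝ) ^ l)⁻¹ < |g l - g (l + 1)| then Nat.find h else Λ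

/-- The hierarchical aggregation `HAgg(g_1,…,g_Λ) = g_{λ̄}` at the cutoff point. -/
noncomputable def hagg (Λ : ℕ) (g : ℕ → ℝ) : ℝ := g (cutoff Λ g)

/-- The sequence of per-scale SOA predictions at `x` along a path `v` through a
weighted subclass collection with subclasses `G l i` at level `l`. -/
noncomputable def gseq {X : Type*} (Λ : ℕ) (G : ℕ → ℕ → Set (X → ℝ)) (x : X)
    (v : Fin Λ → ℕ) : ℕ → ℝ :=
  fun t => if ht : 1 ≤ t ∧ t ≤ Λ then
    soa (G t (v ⟨t - 1, by omega⟩)) ((2:ℝ) ^ t)⁻¹ x else 0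

/-- `SOA(G^v_{1:Λ})(x)`: hierarchical aggregation along the path `v`. -/
noncomputable def soaPath {X : Type*} (Λ : ℕ) (G : ℕ → ℕ → Set (X → ℝ)) (x : X)
    (v : Fin Λ → ℕ) : ℝ := hagg Λ (gseq Λ G x v)

/-- The truncated error `Terr(G^v_{1:Λ}, x, y)`. -/
noncomputable def terrPath {X : Type*} (Λ : ℕ) (G : ℕ → ℕ → Set (X → ℝ)) (x : X)
    (v : Fin Λ → ℕ) (y : ℝ) : ℝ :=
  max |soaPath Λ G x v - y| ((2:ℝ) ^ cutoff Λ (gseq Λ G x v))⁻¹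

/-- `N_Λ(T)`: the finite set of index paths `v` with `v l < n (l+1)` at each level. -/
noncomputable def paths (Λ : ℕ) (n : ℕ → ℕ) : Finset (Fin Λ → ℕ) :=
  Fintype.piFinset (fun l : Fin Λ => Finset.range (n (l.1 + 1)))

/-- `P_w(v) = Π_λ w_λ^{v_λ} / Σ_{u_λ} w_λ^{u_λ}`. -/
noncomputable def Pw (Λ : ℕ) (n : ℕ → ℕ) (w : ℕ → ℕ → ℝ) (v : Fin Λ → ℕ) : ℝ :=
  ∏ l : Fin Λ, w (l.1 + 1) (v l) / ∑ i ∈ Finset.range (n (l.1 + 1)), w (l.1 + 1) i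

/-- `Vote(T, x) = Σ_v P_w(v)·SOA(G^v_{1:Λ})(x)`. -/
noncomputable def voteAt {X : Type*} (Λ : ℕ) (n : ℕ → ℕ) (G : ℕ → ℕ → Set (X → ℝ))
    (w : ℕ → ℕ → ℝ) (x : X) : ℝ :=
  ∑ v ∈ paths Λ n, Pw Λ n w v * soaPath Λ G x v

lemma cutoff_le (Λ : ℕ) (g : ℕ → ℝ) : cutoff Λ g ≤ Λ := by
  classical
  unfold cutoff
  split
  · next h => exact le_of_lt (Nat.find_spec h).1.2
  · exact le_rfl

lemma cutoff_step (Λ : ℕ) (g : ℕ → ℝ) (t : ℕ) (h1 : 1 ≤ t) (h2 : t < Λ)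
    (h3 : t < cutoff Λ g) : |g t - g (t + 1)| ≤ 2 * ((2:ℝ) ^ t)⁻¹ := by
  classical
  by_contra hc
  push_neg at hc
  have hex : ∃ l, (1 ≤ l ∧ l < Λ) ∧ 2 * ((2:ℝ) ^ l)⁻¹ < |g l - g (l + 1)| :=
    ⟨t, ⟨h1, h2⟩, hc⟩
  unfold cutoff at h3
  rw [dif_pos hex] at h3
  have hfind : Nat.find hex ≤ t := Nat.find_le ⟨⟨h1, h2⟩, hc⟩
  omega

lemma telescope (Λ : ℕ) (g : ℕ → ℝ) (l : ℕ) (h1 : 1 ≤ l) :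
    ∀ k : ℕ, l + k ≤ cutoff Λ g →
      |g l - g (l + k)| ≤ 4 * (((2:ℝ) ^ l)⁻¹ - ((2:ℝ) ^ (l + k))⁻¹) := by
  intro k
  induction k with
  | zero => simp
  | succ m ih =>
    intro hm
    have hm' : l + m ≤ cutoff Λ g := by omega
    have step : |g (l + m) - g (l + m + 1)| ≤ 2 * ((2:ℝ) ^ (l + m))⁻¹ := by
      apply cutoff_step Λ g (l + m) (by omega)
      · have := cutoff_le Λ g; omega
      · omega
    have tri : |g l - g (l + (m + 1))| ≤ |g l - g (l + m)| + |g (l + m) - g (l + m + 1)| := by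
      have := abs_sub_le (g l) (g (l + m)) (g (l + m + 1))
      simpa [show l + (m + 1) = l + m + 1 by omega] using this
    have ihm := ih hm'
    have hpow : ((2:ℝ) ^ (l + (m + 1)))⁻¹ = ((2:ℝ) ^ (l + m))⁻¹ / 2 := by
      rw [show l + (m + 1) = (l + m) + 1 by omega, pow_succ]
      field_simp
    rw [hpow]
    nlinarith [tri, ihm, step]

lemma terr_lb (Λ l : ℕ) (g : ℕ → ℝ) (y : ℝ) (h1 : 1 ≤ l) (h2 : l ≤ Λ)
    (hbad : 5 * ((2:ℝ) ^ l)⁻¹ < |g l - y|) :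
    ((2:ℝ) ^ l)⁻¹ ≤ max |g (cutoff Λ g) - y| ((2:ℝ) ^ cutoff Λ g)⁻¹ := by
  set c := cutoff Λ g with hc
  rcases le_or_gt c l with h | h
  · refine le_max_of_le_right ?_
    exact inv_anti₀ (by positivity) (pow_le_pow_right₀ (by norm_num) h)
  · refine le_max_of_le_left ?_
    obtain ⟨k, hk⟩ : ∃ k, c = l + k := ⟨c - l, by omega⟩
    have htel : |g l - g c| ≤ 4 * ((2:ℝ) ^ l)⁻¹ := by
      have := telescope Λ g l h1 k (by omega)
      have hpos : (0:ℝ) ≤ ((2:ℝ) ^ c)⁻¹ := by positivity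
      rw [← hk] at this
      nlinarith
    have habs : |g l - y| - |g c - y| ≤ |g l - g c| := by
      have := abs_sub_abs_le_abs_sub (g l - y) (g c - y)
      simpa using this
    nlinarith

/-- if `(x, y) ∈ Highvote(T, α)` (that is, `y = Vote(T,x)` and the average
truncated error `Σ_v P_w(v)·Terr(G^v_{1:Λ}, x, y) ≤ α`), then for every level `λ ∈ [Λ]`
the weighted fraction of indices `v_λ` with `|SOA_{α_λ}(G_λ^{v_λ})(x) − y| > 5·α_λ` is at
most `α/α_λ`, where `α_λ = 2^{-λ}`. -/
theorem stmt12 {X : Type*} (Λ : ℕ) (hΛ : 1 ≤ Λ) (x : X)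
    (n : ℕ → ℕ) (hn : ∀ l, 1 ≤ l → l ≤ Λ → 1 ≤ n l)
    (G : ℕ → ℕ → Set (X → ℝ))
    (hG : ∀ l i, ∀ f ∈ G l i, ∀ x' : X, f x' ∈ Set.Icc (0:ℝ) 1)
    (w : ℕ → ℕ → ℝ) (hw : ∀ l i, 0 ≤ w l i)
    (hW : ∀ l, 1 ≤ l → l ≤ Λ → 0 < ∑ i ∈ Finset.range (n l), w l i)
    (α : ℝ) (hα : 0 ≤ α)
    (y : ℝ) (hy : y = voteAt Λ n G w x)
    (hhigh : ∑ v ∈ paths Λ n, Pw Λ n w v * terrPath Λ G x v y ≤ α) :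
    ∀ l, 1 ≤ l → l ≤ Λ →
      (∑ i ∈ Finset.range (n l),
          if 5 * ((2:ℝ) ^ l)⁻¹ < |soa (G l i) ((2:ℝ) ^ l)⁻¹ x - y| then w l i else 0)
        / (∑ i ∈ Finset.range (n l), w l i) ≤ α * 2 ^ l := by
  intro l hl1 hl2
  classical
  set W : ℕ → ℝ := fun m => ∑ i ∈ Finset.range (n m), w m i with hWdef
  have hWpos : ∀ j : Fin Λ, 0 < W (j.1 + 1) := fun j => hW _ (by omega) (by omega)
  have hWlpos : 0 < W l := hW l hl1 hl2
  set k : Fin Λ := ⟨l - 1, by omega⟩ with hk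
  have hkl : k.1 + 1 = l := by simp [hk]; omega
  set χ : ℕ → ℝ := fun i =>
    if 5 * ((2:ℝ) ^ l)⁻¹ < |soa (G l i) ((2:ℝ) ^ l)⁻¹ x - y| then 1 else 0 with hχ
  -- termwise lower bound on the truncated error
  have key : ∀ v ∈ paths Λ n,
      ((2:ℝ) ^ l)⁻¹ * (Pw Λ n w v * χ (v k)) ≤ Pw Λ n w v * terrPath Λ G x v y := by
    intro v _
    have hPw : 0 ≤ Pw Λ n w v :=
      Finset.prod_nonneg fun j _ => div_nonneg (hw _ _) (le_of_lt (hWpos j))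
    by_cases hb : 5 * ((2:ℝ) ^ l)⁻¹ < |soa (G l (v k)) ((2:ℝ) ^ l)⁻¹ x - y|
    · have hχ1 : χ (v k) = 1 := if_pos hb
      rw [hχ1, mul_one]
      have hg : gseq Λ G x v l = soa (G l (v k)) ((2:ℝ) ^ l)⁻¹ x := by
        have : (1 ≤ l ∧ l ≤ Λ) := ⟨hl1, hl2⟩
        simp only [gseq, dif_pos this]
        rfl
      have hterr : ((2:ℝ) ^ l)⁻¹ ≤ terrPath Λ G x v y := by
        have := terr_lb Λ l (gseq Λ G x v) y hl1 hl2 (by rw [hg]; exact hb)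
        simpa [terrPath, soaPath, hagg] using this
      calc ((2:ℝ) ^ l)⁻¹ * Pw Λ n w v ≤ terrPath Λ G x v y * Pw Λ n w v :=
            mul_le_mul_of_nonneg_right hterr hPw
        _ = Pw Λ n w v * terrPath Λ G x v y := mul_comm _ _
    · have hχ0 : χ (v k) = 0 := if_neg hb
      rw [hχ0, mul_zero, mul_zero]
      exact mul_nonneg hPw (le_trans (by positivity) (le_max_right _ _))
  have S1 : ((2:ℝ) ^ l)⁻¹ * ∑ v ∈ paths Λ n, Pw Λ n w v * χ (v k) ≤ α := by
    rw [Finset.mul_sum]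
    exact le_trans (Finset.sum_le_sum key) hhigh
  -- marginalization
  set num : ℝ := ∑ i ∈ Finset.range (n l),
    if 5 * ((2:ℝ) ^ l)⁻¹ < |soa (G l i) ((2:ℝ) ^ l)⁻¹ x - y| then w l i else 0 with hnum
  have S2 : ∑ v ∈ paths Λ n, Pw Λ n w v * χ (v k) = num / W l := by
    have h1 : ∀ v : Fin Λ → ℕ, Pw Λ n w v * χ (v k)
        = ∏ j : Fin Λ, (w (j.1 + 1) (v j) / W (j.1 + 1)) * (if j = k then χ (v j) else 1) := by
      intro v
      rw [Finset.prod_mul_distrib]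
      congr 1
      rw [Finset.prod_ite_eq' Finset.univ k fun j => χ (v j)]
      simp
    calc ∑ v ∈ paths Λ n, Pw Λ n w v * χ (v k)
        = ∑ v ∈ paths Λ n, ∏ j : Fin Λ,
            ((w (j.1 + 1) (v j) / W (j.1 + 1)) * (if j = k then χ (v j) else 1)) :=
          Finset.sum_congr rfl fun v _ => h1 v
      _ = ∏ j : Fin Λ, ∑ i ∈ Finset.range (n (j.1 + 1)),
            ((w (j.1 + 1) i / W (j.1 + 1)) * (if j = k then χ i else 1)) :=
          by
            unfold paths
            exact (Finset.prod_univ_sum (fun j : Fin Λ => Finset.range (n (j.1 + 1)))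
              (fun j i => (w (j.1 + 1) i / W (j.1 + 1)) * (if j = k then χ i else 1))).symm
      _ = ∏ j : Fin Λ, (if j = k then num / W l else 1) := by
          apply Finset.prod_congr rfl
          intro j _
          by_cases hj : j = k
          · subst hj
            simp only [if_pos rfl, hkl]
            rw [Finset.sum_div]
            apply Finset.sum_congr rfl
            intro i _
            by_cases hb : 5 * ((2:ℝ) ^ l)⁻¹ < |soa (G l i) ((2:ℝ) ^ l)⁻¹ x - y|
            · simp [hχ, hb]
            · simp [hχ, hb]
          · simp only [if_neg hj, mul_one]
            rw [← Finset.sum_div, div_self (ne_of_gt (hWpos j))]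
      _ = num / W l := by
          rw [Finset.prod_ite_eq' Finset.univ k fun _ => num / W l]
          simp
  rw [S2] at S1
  have h2l : (0:ℝ) < 2 ^ l := by positivity
  rw [inv_mul_le_iff₀ h2l] at S1
  calc num / W l ≤ 2 ^ l * α := S1
    _ = α * 2 ^ l := mul_comm _ _
end

section
/- Given a binary class F ⊆ {0,1}^X, the class mix(F) ⊆ [0,1]^{Δ°(X)} (obtained by averaging: f(P) := E_{x∼P}[f(x)] for finite-support P) satisfies sfat_α(mix(F)) ≤ O(Ldim(F)·log(Ldim(F)/α)) for all α > 0. -/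
/-- A binary-shattered tree for a `{0,1}`-valued class: at each node along every path,
both labels are realized by members of `F`. -/
def BShatters {X : Type*} (F : Set (X → ℝ)) (d : ℕ) (x : List Bool → X) : Prop :=
  ∀ ε : ℕ → Bool, ∃ f ∈ F, ∀ t < d,
    f (x (pathPrefix ε t)) = if ε t then 1 else 0

/-- The Littlestone dimension of a `{0,1}`-valued class. -/
noncomputable def Ldim {X : Type*} (F : Set (X → ℝ)) : ℕ∞ :=
  sSup {n : ℕ∞ | ∃ d : ℕ, n = (d : ℕ∞) ∧ ∃ x, BShatters F d x}

/-- Finite-support probability distributions on `X`. -/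
def FinDist (X : Type*) : Type _ :=
  {p : X →₀ ℝ // (∀ x, 0 ≤ p x) ∧ p.sum (fun _ v => v) = 1}

/-- The mixture class `mix(F) ⊆ [0,1]^{Δ°(X)}`: each `f ∈ F` induces the map
`P ↦ E_{x∼P}[f(x)]` on finite-support distributions. -/
def mixClass {X : Type*} (F : Set (X → ℝ)) : Set (FinDist X → ℝ) :=
  {g | ∃ f ∈ F, ∀ p : FinDist X, g p = p.1.sum (fun x v => v * f x)}



section TreeSauer
variable {X : Type}

lemma pathPrefix_zero (ε : ℕ → Bool) : pathPrefix ε 0 = [] := by simp [pathPrefix]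

lemma pathPrefix_succ' (ε : ℕ → Bool) (t : ℕ) :
    pathPrefix ε (t+1) = ε 0 :: pathPrefix (fun i => ε (i+1)) t := by
  simp [pathPrefix, List.ofFn_succ]

lemma pathPrefix_snoc (ε : ℕ → Bool) (t : ℕ) :
    pathPrefix ε (t+1) = pathPrefix ε t ++ [ε t] := by
  rw [pathPrefix, List.ofFn_succ']
  simp [pathPrefix, Fin.last, List.concat_eq_append, Function.comp, Fin.castSucc]

def Sat (F : Set (X → ℝ)) (y : List Bool → X) (b : List Bool) : Prop :=
  ∃ f ∈ F, ∀ j < b.length, f (y (b.take j)) = if b.getD j false then 1 else 0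

def RS (F : Set (X → ℝ)) (L : ℕ) (y : List Bool → X) : Set (List Bool) :=
  {b | b.length = L ∧ Sat F y b}

lemma RS_finite (F : Set (X → ℝ)) (L : ℕ) (y : List Bool → X) : (RS F L y).Finite := by
  apply Set.Finite.subset (Set.finite_range (fun v : Fin L → Bool => List.ofFn v))
  rintro b ⟨hb, -⟩
  refine ⟨fun i => b.getD i false, ?_⟩
  apply List.ext_getElem (by simp [hb])
  intro i h1 h2
  simp only [List.getElem_ofFn]
  rw [List.getD_eq_getElem]

lemma bshatters_mono {F G : Set (X → ℝ)} (h : F ⊆ G) {d : ℕ} {x : List Bool → X}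
    (hs : BShatters F d x) : BShatters G d x := by
  intro ε
  obtain ⟨f, hf, hf2⟩ := hs ε
  exact ⟨f, h hf, hf2⟩

lemma bshatters_combine {F : Set (X → ℝ)} {x0 : X} {d : ℕ} {x1 x2 : List Bool → X}
    (h1 : BShatters {f | f ∈ F ∧ f x0 = 1} d x1)
    (h2 : BShatters {f | f ∈ F ∧ f x0 = 0} d x2) :
    ∃ z, BShatters F (d+1) z := by
  refine ⟨fun w => match w with
    | [] => x0
    | (c :: w') => if c then x1 w' else x2 w', ?_⟩
  intro ε
  have key : ∀ (f : X → ℝ), f ∈ F → f x0 = (if ε 0 then 1 else 0) →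
      (∀ t < d, f ((if ε 0 then x1 else x2) (pathPrefix (fun i => ε (i+1)) t))
        = if ε (t+1) then 1 else 0) →
      ∀ t < d + 1,
        f ((fun w => match w with
          | [] => x0
          | (c :: w') => if c then x1 w' else x2 w') (pathPrefix ε t)) = if ε t then 1 else 0 := by
    intro f hfF hf0 hrec t ht
    match t with
    | 0 => rw [pathPrefix_zero]; exact hf0
    | Nat.succ u =>
      rw [pathPrefix_succ']
      have := hrec u (by omega)
      cases hb : ε 0 <;> simp only [hb] at this ⊢ <;> simpa using this
  cases hb : ε 0 with
  | true =>
    obtain ⟨f, hf, hf2⟩ := h1 (fun i => ε (i+1))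
    exact ⟨f, hf.1, key f hf.1 (by rw [hb]; exact if_pos rfl ▸ hf.2) (by
      intro t ht; rw [hb]; simpa using hf2 t ht) ⟩
  | false =>
    obtain ⟨f, hf, hf2⟩ := h2 (fun i => ε (i+1))
    exact ⟨f, hf.1, key f hf.1 (by rw [hb]; simpa using hf.2) (by
      intro t ht; rw [hb]; simpa using hf2 t ht)⟩

lemma sauer_tree : ∀ (L : ℕ) (F : Set (X → ℝ)) (y : List Bool → X) (d : ℕ),
    (∀ x, ¬ BShatters F (d+1) x) → (RS F L y).ncard ≤ (L+1)^d := by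
  intro L
  induction L with
  | zero =>
    intro F y d _
    have hsub : RS F 0 y ⊆ {[]} := by
      rintro b ⟨hb, -⟩
      simp [List.length_eq_zero_iff.mp hb]
    calc (RS F 0 y).ncard ≤ ({[]} : Set (List Bool)).ncard :=
          Set.ncard_le_ncard hsub (Set.finite_singleton _)
      _ = 1 := Set.ncard_singleton _
      _ ≤ (0+1)^d := by simp
  | succ L IH =>
    intro F y d hno
    set Ft : Set (X → ℝ) := {f | f ∈ F ∧ f (y []) = 1} with hFt
    set Ff : Set (X → ℝ) := {f | f ∈ F ∧ f (y []) = 0} with hFf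
    have hsub : RS F (L+1) y ⊆
        (List.cons true '' RS Ft L (fun w => y (true :: w))) ∪
        (List.cons false '' RS Ff L (fun w => y (false :: w))) := by
      rintro b ⟨hb, f, hf, hj⟩
      match b with
      | [] => simp at hb
      | (hd :: tl) =>
        have h0 : f (y []) = if hd then 1 else 0 := by
          have := hj 0 (by simp)
          simpa using this
        have htl : ∀ c, hd = c → tl ∈ RS (if c then Ft else Ff) L (fun w => y (c :: w)) := by
          intro c hc
          subst hc
          refine ⟨by simpa using hb, f, ?_, ?_⟩
          · cases hd
            · exact ⟨hf, by simpa using h0⟩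
            · exact ⟨hf, by simpa using h0⟩
          · intro j hjL
            have := hj (j+1) (by simpa using Nat.succ_lt_succ (by simpa using hjL))
            simpa using this
        cases hd
        · exact Or.inr ⟨tl, by simpa using htl false rfl, rfl⟩
        · exact Or.inl ⟨tl, by simpa using htl true rfl, rfl⟩
    have hfin1 : (List.cons true '' RS Ft L (fun w => y (true :: w))).Finite :=
      (RS_finite _ _ _).image _
    have hfin2 : (List.cons false '' RS Ff L (fun w => y (false :: w))).Finite :=
      (RS_finite _ _ _).image _
    have hcard : (RS F (L+1) y).ncard ≤
        (RS Ft L (fun w => y (true :: w))).ncard +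
        (RS Ff L (fun w => y (false :: w))).ncard := by
      calc (RS F (L+1) y).ncard ≤ _ := Set.ncard_le_ncard hsub (hfin1.union hfin2)
        _ ≤ _ + _ := Set.ncard_union_le _ _
        _ ≤ _ := by
            rw [Set.ncard_image_of_injective _ (fun a b h => by injection h),
              Set.ncard_image_of_injective _ (fun a b h => by injection h)]
    have hnoT : ∀ x, ¬ BShatters Ft (d+1) x := fun x h =>
      hno x (bshatters_mono (fun f hf => hf.1) h)
    have hnoF : ∀ x, ¬ BShatters Ff (d+1) x := fun x h =>
      hno x (bshatters_mono (fun f hf => hf.1) h)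
    have hcase : (∀ x, ¬ BShatters Ft d x) ∨ (∀ x, ¬ BShatters Ff d x) := by
      by_contra h
      push_neg at h
      obtain ⟨⟨x1, h1⟩, ⟨x2, h2⟩⟩ := h
      obtain ⟨z, hz⟩ := bshatters_combine h1 h2
      exact hno z hz
    match d with
    | 0 =>
      -- one of the classes is empty
      have hemp : RS Ft L (fun w => y (true :: w)) = ∅ ∨
          RS Ff L (fun w => y (false :: w)) = ∅ := by
        refine hcase.imp ?_ ?_ <;>
        · intro h
          rw [Set.eq_empty_iff_forall_notMem]
          rintro b ⟨-, f, hf, -⟩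
          exact h (fun _ => y []) (fun ε => ⟨f, hf, fun t ht => absurd ht (by omega)⟩)
      have h1 : (RS Ft L (fun w => y (true :: w))).ncard ≤ 1 := IH _ _ 0 hnoT
      have h2 : (RS Ff L (fun w => y (false :: w))).ncard ≤ 1 := IH _ _ 0 hnoF
      cases hemp with
      | inl h => rw [h] at hcard; simpa using le_trans hcard (by simpa using h2)
      | inr h => rw [h] at hcard; simpa using le_trans hcard (by simpa using h1)
    | Nat.succ e =>
      have key : ∀ (A B : Set (X → ℝ)) , A = Ft ∨ A = Ff → B = Ft ∨ B = Ff →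
          True → True := fun _ _ _ _ _ => trivial
      have hbound : (RS Ft L (fun w => y (true :: w))).ncard +
          (RS Ff L (fun w => y (false :: w))).ncard ≤ (L+1+1)^(e+1) := by
        have hstep : (L+1)^(e+1) + (L+1)^e ≤ (L+2)^(e+1) := by
          have h1 : (L+1)^(e+1) + (L+1)^e = (L+1)^e * (L+2) := by ring
          have h2 : (L+1)^e * (L+2) ≤ (L+2)^e * (L+2) :=
            Nat.mul_le_mul_right _ (Nat.pow_le_pow_left (by omega) e)
          rw [h1]; calc _ ≤ (L+2)^e * (L+2) := h2
            _ = (L+2)^(e+1) := by ring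
        cases hcase with
        | inl h =>
          have hA := IH Ft (fun w => y (true :: w)) e (by
            intro x hx; exact h x hx)
          have hB := IH Ff (fun w => y (false :: w)) (e+1) hnoF
          calc _ ≤ (L+1)^e + (L+1)^(e+1) := Nat.add_le_add hA hB
            _ = (L+1)^(e+1) + (L+1)^e := by ring
            _ ≤ (L+2)^(e+1) := hstep
            _ = (L+1+1)^(e+1) := by ring
        | inr h =>
          have hA := IH Ft (fun w => y (true :: w)) (e+1) hnoT
          have hB := IH Ff (fun w => y (false :: w)) e (by
            intro x hx; exact h x hx)
          calc _ ≤ (L+1)^(e+1) + (L+1)^e := Nat.add_le_add hA hB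
            _ ≤ (L+2)^(e+1) := hstep
            _ = (L+1+1)^(e+1) := by ring
      exact le_trans hcard hbound

end TreeSauer

section Chernoff
open Real
open scoped Classical
variable {X : Type}

noncomputable def Ep (p : X →₀ ℝ) (g : X → ℝ) : ℝ := ∑ x ∈ p.support, p x * g x

noncomputable def TT (p : X →₀ ℝ) (m : ℕ) : Finset (Fin m → X) :=
  Fintype.piFinset fun _ => p.support

lemma prod_formula (p : X →₀ ℝ) (m : ℕ) (g : Fin m → X → ℝ) :
    ∑ xs ∈ TT p m, ∏ j, (p (xs j) * g j (xs j))
      = ∏ j : Fin m, ∑ x ∈ p.support, p x * g j x := by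
  unfold TT
  exact (Finset.prod_univ_sum (fun _ : Fin m => p.support) (fun i x => p x * g i x)).symm

lemma sum_W (p : X →₀ ℝ) (hp1 : ∑ x ∈ p.support, p x = 1) (m : ℕ) :
    ∑ xs ∈ TT p m, ∏ j, p (xs j) = 1 := by
  have := prod_formula p m (fun _ _ => 1)
  simpa [hp1] using this

lemma mgf_bound (p : X →₀ ℝ) (hp0 : ∀ x, 0 ≤ p x) (hp1 : ∑ x ∈ p.support, p x = 1)
    (f : X → ℝ) (hf : ∀ x, f x = 0 ∨ f x = 1) (lam : ℝ) (hlam : |lam| ≤ 1) :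
    ∑ x ∈ p.support, p x * exp (lam * (f x - Ep p f)) ≤ exp (lam^2) := by
  set μ := Ep p f with hμ
  have hμ0 : 0 ≤ μ := Finset.sum_nonneg fun x _ => by
    rcases hf x with h|h <;> simp [h, hp0 x]
  have hμ1 : μ ≤ 1 := by
    rw [hμ, Ep, ← hp1]
    apply Finset.sum_le_sum
    intro x _
    rcases hf x with h|h <;> simp [h, hp0 x]
  have hexp : ∀ x, exp (lam * (f x - μ)) = exp (-(lam*μ)) * (1 + f x * (exp lam - 1)) := by
    intro x
    rcases hf x with h|h
    · rw [h, show lam*((0:ℝ)-μ) = -(lam*μ) by ring]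
      ring
    · rw [h, show lam*((1:ℝ)-μ) = lam + -(lam*μ) by ring, Real.exp_add]
      ring
  have hsum : ∑ x ∈ p.support, p x * exp (lam * (f x - μ))
      = exp (-(lam*μ)) * (1 + μ * (exp lam - 1)) := by
    calc ∑ x ∈ p.support, p x * exp (lam * (f x - μ))
        = ∑ x ∈ p.support, (exp (-(lam*μ)) * (p x + p x * f x * (exp lam - 1))) := by
          apply Finset.sum_congr rfl
          intro x _
          rw [hexp x]; ring
      _ = exp (-(lam*μ)) * ((∑ x ∈ p.support, p x) + (∑ x ∈ p.support, p x * f x) * (exp lam - 1)) := by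
          rw [← Finset.mul_sum, Finset.sum_add_distrib, ← Finset.sum_mul]
      _ = exp (-(lam*μ)) * (1 + μ * (exp lam - 1)) := by rw [hp1, hμ, Ep]
  rw [hsum]
  have h1 : 1 + μ * (exp lam - 1) ≤ exp (μ * (exp lam - 1)) := by
    have := Real.add_one_le_exp (μ * (exp lam - 1)); linarith
  have h2 : exp (-(lam*μ)) * (1 + μ * (exp lam - 1)) ≤ exp (-(lam*μ)) * exp (μ * (exp lam - 1)) := by
    apply mul_le_mul_of_nonneg_left h1 (le_of_lt (Real.exp_pos _))
  have h3 : exp (-(lam*μ)) * exp (μ * (exp lam - 1)) = exp (μ * (exp lam - 1 - lam)) := by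
    rw [← Real.exp_add]; ring_nf
  have hkey : exp lam - 1 - lam ≤ lam^2 := by
    have hb := Real.exp_bound hlam (n := 2) (by norm_num)
    have : exp lam - (1 + lam) ≤ |lam|^2 * (3 / (2*2)) := by
      have := abs_le.mp hb
      simp only [Finset.sum_range_succ, Finset.sum_range_zero] at this
      norm_num at this ⊢
      linarith [this.2]
    have habs : |lam|^2 = lam^2 := sq_abs lam
    nlinarith
  have hkey0 : 0 ≤ exp lam - 1 - lam := by
    have := Real.add_one_le_exp lam; linarith
  have h4 : μ * (exp lam - 1 - lam) ≤ lam^2 := by nlinarith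
  calc _ ≤ exp (μ * (exp lam - 1 - lam)) := by rw [← h3] at *; exact h2.trans (le_of_eq h3) |>.trans (le_of_eq rfl)
    _ ≤ exp (lam^2) := Real.exp_le_exp.mpr h4

lemma tail_bound (p : X →₀ ℝ) (hp0 : ∀ x, 0 ≤ p x) (hp1 : ∑ x ∈ p.support, p x = 1)
    (f : X → ℝ) (hf : ∀ x, f x = 0 ∨ f x = 1) (m : ℕ) (lam : ℝ) (hlam : |lam| ≤ 1) (a : ℝ) :
    ∑ xs ∈ (TT p m).filter (fun xs => a ≤ lam * ∑ j, (f (xs j) - Ep p f)),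
      ∏ j, p (xs j) ≤ exp (m * lam^2 - a) := by
  set μ := Ep p f with hμ
  have hW0 : ∀ xs : Fin m → X, 0 ≤ ∏ j, p (xs j) :=
    fun xs => Finset.prod_nonneg fun j _ => hp0 _
  have step1 : ∑ xs ∈ (TT p m).filter (fun xs => a ≤ lam * ∑ j, (f (xs j) - μ)),
      ∏ j, p (xs j)
      ≤ ∑ xs ∈ TT p m, (∏ j, p (xs j)) * exp (lam * (∑ j, (f (xs j) - μ)) - a) := by
    calc ∑ xs ∈ (TT p m).filter (fun xs => a ≤ lam * ∑ j, (f (xs j) - μ)), ∏ j, p (xs j)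
        ≤ ∑ xs ∈ (TT p m).filter (fun xs => a ≤ lam * ∑ j, (f (xs j) - μ)),
            (∏ j, p (xs j)) * exp (lam * (∑ j, (f (xs j) - μ)) - a) := by
          apply Finset.sum_le_sum
          intro xs hxs
          rw [Finset.mem_filter] at hxs
          have h1 : (1:ℝ) ≤ exp (lam * (∑ j, (f (xs j) - μ)) - a) := by
            rw [← Real.exp_zero]
            exact Real.exp_le_exp.mpr (by linarith [hxs.2])
          nlinarith [hW0 xs, h1]
      _ ≤ _ := by
          apply Finset.sum_le_sum_of_subset_of_nonneg (Finset.filter_subset _ _)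
          intro xs _ _
          exact mul_nonneg (hW0 xs) (le_of_lt (Real.exp_pos _))
  have step2 : ∑ xs ∈ TT p m, (∏ j, p (xs j)) * exp (lam * (∑ j, (f (xs j) - μ)) - a)
      = exp (-a) * ∑ xs ∈ TT p m, ∏ j, (p (xs j) * exp (lam * (f (xs j) - μ))) := by
    rw [Finset.mul_sum]
    apply Finset.sum_congr rfl
    intro xs _
    rw [Finset.prod_mul_distrib]
    rw [show lam * (∑ j, (f (xs j) - μ)) - a = (∑ j, lam * (f (xs j) - μ)) + (-a) by
      rw [Finset.mul_sum]; ring]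
    rw [Real.exp_add, Real.exp_sum]
    ring
  have step3 : ∑ xs ∈ TT p m, ∏ j, (p (xs j) * exp (lam * (f (xs j) - μ)))
      ≤ (exp (lam^2))^m := by
    rw [prod_formula p m (fun _ x => exp (lam * (f x - μ)))]
    calc ∏ j : Fin m, ∑ x ∈ p.support, p x * exp (lam * (f x - μ))
        ≤ ∏ j : Fin m, exp (lam^2) := by
          apply Finset.prod_le_prod
          · intro j _
            apply Finset.sum_nonneg
            intro x _
            exact mul_nonneg (hp0 x) (le_of_lt (Real.exp_pos _))
          · intro j _
            exact mgf_bound p hp0 hp1 f hf lam hlam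
      _ = (exp (lam^2))^m := by simp
  calc _ ≤ _ := step1
    _ = _ := step2
    _ ≤ exp (-a) * (exp (lam^2))^m := by
        apply mul_le_mul_of_nonneg_left step3 (le_of_lt (Real.exp_pos _))
    _ = exp (m * lam^2 - a) := by
        rw [← Real.exp_nat_mul, ← Real.exp_add]; ring_nf

lemma sum_union_le' {β : Type*} [DecidableEq β] (A B : Finset β) (g : β → ℝ)
    (hg : ∀ x, 0 ≤ g x) :
    ∑ x ∈ A ∪ B, g x ≤ ∑ x ∈ A, g x + ∑ x ∈ B, g x := by
  have h1 : A ∪ B = A ∪ (B \ A) := by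
    rw [Finset.union_sdiff_self_eq_union]
  rw [h1, Finset.sum_union (Finset.disjoint_sdiff)]
  have h2 : ∑ x ∈ B \ A, g x ≤ ∑ x ∈ B, g x :=
    Finset.sum_le_sum_of_subset_of_nonneg (Finset.sdiff_subset) (fun x _ _ => hg x)
  linarith [Finset.sum_nonneg (fun x (_ : x ∈ A) => hg x)]

lemma dev_bound (p : X →₀ ℝ) (hp0 : ∀ x, 0 ≤ p x) (hp1 : ∑ x ∈ p.support, p x = 1)
    (f : X → ℝ) (hf : ∀ x, f x = 0 ∨ f x = 1) (m : ℕ) (hm : 0 < m)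
    (α : ℝ) (hα : 0 < α) (hα1 : α ≤ 1) :
    ∑ xs ∈ (TT p m).filter (fun xs => ¬ |(∑ j, f (xs j))/m - Ep p f| ≤ α/4),
      ∏ j, p (xs j) ≤ 2 * exp (-(m * α^2/64)) := by
  set μ := Ep p f with hμ
  have hW0 : ∀ xs : Fin m → X, 0 ≤ ∏ j, p (xs j) :=
    fun xs => Finset.prod_nonneg fun j _ => hp0 _
  have hlam : |α/8| ≤ 1 := by rw [abs_of_nonneg (by linarith)]; linarith
  have hlam' : |-(α/8)| ≤ 1 := by rw [abs_neg]; exact hlam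
  have hup := tail_bound p hp0 hp1 f hf m (α/8) hlam (m*α^2/32)
  have hlo := tail_bound p hp0 hp1 f hf m (-(α/8)) hlam' (m*α^2/32)
  have hval : (m:ℝ) * (α/8)^2 - m*α^2/32 = -(m * α^2/64) := by ring
  have hval' : (m:ℝ) * (-(α/8))^2 - m*α^2/32 = -(m * α^2/64) := by ring
  rw [hval] at hup
  rw [hval'] at hlo
  have hsplit : ∀ xs : Fin m → X, ¬ |(∑ j, f (xs j))/m - μ| ≤ α/4 →
      (m*α^2/32 ≤ (α/8) * ∑ j, (f (xs j) - μ)) ∨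
      (m*α^2/32 ≤ (-(α/8)) * ∑ j, (f (xs j) - μ)) := by
    intro xs h
    have hmpos : (0:ℝ) < m := by exact_mod_cast hm
    have hsum : ∑ j, (f (xs j) - μ) = (∑ j, f (xs j)) - m * μ := by
      rw [Finset.sum_sub_distrib]
      simp [mul_comm]
    have hfac : (∑ j, f (xs j)) - m * μ = m * ((∑ j, f (xs j))/m - μ) := by
      field_simp
    rcases abs_cases ((∑ j, f (xs j))/m - μ) with ⟨he, _⟩|⟨he, _⟩
    · left
      rw [hsum, hfac]
      have hv : α/4 < (∑ j, f (xs j))/m - μ := by rw [← he]; linarith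
      have hmul := mul_lt_mul_of_pos_left hv (show (0:ℝ) < α/8 * m by positivity)
      nlinarith [hmul]
    · right
      rw [hsum, hfac]
      have hv : α/4 < -((∑ j, f (xs j))/m - μ) := by rw [← he]; linarith
      have hmul := mul_lt_mul_of_pos_left hv (show (0:ℝ) < α/8 * m by positivity)
      nlinarith [hmul]
  calc ∑ xs ∈ (TT p m).filter (fun xs => ¬ |(∑ j, f (xs j))/m - μ| ≤ α/4), ∏ j, p (xs j)
      ≤ ∑ xs ∈ ((TT p m).filter (fun xs => m*α^2/32 ≤ (α/8) * ∑ j, (f (xs j) - μ))) ∪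
          ((TT p m).filter (fun xs => m*α^2/32 ≤ (-(α/8)) * ∑ j, (f (xs j) - μ))),
          ∏ j, p (xs j) := by
        apply Finset.sum_le_sum_of_subset_of_nonneg
        · intro xs hxs
          rw [Finset.mem_filter] at hxs
          rw [Finset.mem_union, Finset.mem_filter, Finset.mem_filter]
          rcases hsplit xs hxs.2 with h|h
          · exact Or.inl ⟨hxs.1, h⟩
          · exact Or.inr ⟨hxs.1, h⟩
        · intro xs _ _
          exact hW0 xs
    _ ≤ (∑ xs ∈ (TT p m).filter (fun xs => m*α^2/32 ≤ (α/8) * ∑ j, (f (xs j) - μ)),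
          ∏ j, p (xs j)) +
        (∑ xs ∈ (TT p m).filter (fun xs => m*α^2/32 ≤ (-(α/8)) * ∑ j, (f (xs j) - μ)),
          ∏ j, p (xs j)) := by
        exact sum_union_le' _ _ _ hW0
    _ ≤ 2 * exp (-(m * α^2/64)) := by
        have := hup
        have := hlo
        linarith

lemma good_sample (p : X →₀ ℝ) (hp0 : ∀ x, 0 ≤ p x) (hp1 : ∑ x ∈ p.support, p x = 1)
    (ι : Type) [Fintype ι] (f : ι → X → ℝ) (hf : ∀ i x, f i x = 0 ∨ f i x = 1)
    (α : ℝ) (hα : 0 < α) (hα1 : α ≤ 1) (m : ℕ) (hm : 0 < m)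
    (hcard : (Fintype.card ι : ℝ) * (2 * exp (-(m * α^2/64))) < 1) :
    ∃ xs : Fin m → X, ∀ i, |(∑ j, f i (xs j))/m - Ep p (f i)| ≤ α/4 := by
  by_contra hcon
  push_neg at hcon
  have hW0 : ∀ xs : Fin m → X, 0 ≤ ∏ j, p (xs j) :=
    fun xs => Finset.prod_nonneg fun j _ => hp0 _
  have h1 : (1:ℝ) = ∑ xs ∈ TT p m, ∏ j, p (xs j) := (sum_W p hp1 m).symm
  have h2 : ∑ xs ∈ TT p m, ∏ j, p (xs j)
      ≤ ∑ xs ∈ TT p m, ∑ i : ι,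
        (if ¬ |(∑ j, f i (xs j))/m - Ep p (f i)| ≤ α/4 then ∏ j, p (xs j) else 0) := by
    apply Finset.sum_le_sum
    intro xs _
    obtain ⟨i0, hi0⟩ := hcon xs
    have : (if ¬ |(∑ j, f i0 (xs j))/m - Ep p (f i0)| ≤ α/4 then ∏ j, p (xs j) else 0)
        = ∏ j, p (xs j) := by
      rw [if_pos (not_le.mpr hi0)]
    calc ∏ j, p (xs j) = _ := this.symm
      _ ≤ _ := Finset.single_le_sum (f := fun i =>
          (if ¬ |(∑ j, f i (xs j))/m - Ep p (f i)| ≤ α/4 then ∏ j, p (xs j) else 0))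
          (fun i _ => by
            split
            · exact hW0 xs
            · exact le_rfl) (Finset.mem_univ i0)
  have h3 : ∑ xs ∈ TT p m, ∑ i : ι,
        (if ¬ |(∑ j, f i (xs j))/m - Ep p (f i)| ≤ α/4 then ∏ j, p (xs j) else 0)
      ≤ (Fintype.card ι : ℝ) * (2 * exp (-(m * α^2/64))) := by
    rw [Finset.sum_comm]
    calc ∑ i : ι, ∑ xs ∈ TT p m,
          (if ¬ |(∑ j, f i (xs j))/m - Ep p (f i)| ≤ α/4 then ∏ j, p (xs j) else 0)
        = ∑ i : ι, ∑ xs ∈ (TT p m).filter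
            (fun xs => ¬ |(∑ j, f i (xs j))/m - Ep p (f i)| ≤ α/4), ∏ j, p (xs j) := by
          apply Finset.sum_congr rfl
          intro i _
          rw [Finset.sum_filter]
      _ ≤ ∑ _i : ι, 2 * exp (-(m * α^2/64)) := by
          apply Finset.sum_le_sum
          intro i _
          exact dev_bound p hp0 hp1 (f i) (hf i) m hm α hα hα1
      _ = (Fintype.card ι : ℝ) * (2 * exp (-(m * α^2/64))) := by
          rw [Finset.sum_const, Finset.card_univ, nsmul_eq_mul]
  linarith [h1, h2, h3, hcard]

end Chernoff

section Assemble
open Real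
open scoped Classical
variable {X : Type}

noncomputable def Dec (bit : List Bool → ℕ → Bool) : ℕ → List Bool
  | 0 => []
  | k+1 => Dec bit k ++ [bit (Dec bit k) k]

lemma Dec_congr (bit1 bit2 : List Bool → ℕ → Bool) (k : ℕ)
    (h : ∀ k' < k, ∀ w, bit1 w k' = bit2 w k') : Dec bit1 k = Dec bit2 k := by
  induction k with
  | zero => rfl
  | succ k IH =>
    have h' := IH (fun k' hk' w => h k' (by omega) w)
    simp only [Dec, h', h k (by omega)]

noncomputable def trc (g : List Bool → Bool) : ℕ → List Bool
  | 0 => []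
  | j+1 => trc g j ++ [g (trc g j)]

lemma trc_length (g : List Bool → Bool) (j : ℕ) : (trc g j).length = j := by
  induction j with
  | zero => rfl
  | succ j IH => simp [trc, IH]

lemma trc_take (g : List Bool → Bool) {a b : ℕ} (h : a ≤ b) :
    (trc g b).take a = trc g a := by
  induction b with
  | zero =>
    have : a = 0 := by omega
    subst this; rfl
  | succ b IH =>
    rcases Nat.lt_or_ge a (b+1) with h'|h'
    · rw [show trc g (b+1) = trc g b ++ [g (trc g b)] from rfl,
        List.take_append_of_le_length (by rw [trc_length]; omega)]
      exact IH (by omega)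
    · have ha : a = b+1 := by omega
      subst ha
      exact List.take_of_length_le (by rw [trc_length])

lemma trc_getD (g : List Bool → Bool) {j L : ℕ} (h : j < L) :
    (trc g L).getD j false = g (trc g j) := by
  induction L with
  | zero => omega
  | succ L IH =>
    rcases Nat.lt_or_ge j L with h'|h'
    · rw [show trc g (L+1) = trc g L ++ [g (trc g L)] from rfl,
        List.getD_append _ _ _ _ (by rw [trc_length]; exact h')]
      exact IH h'
    · have hj : j = L := by omega
      subst hj
      rw [show trc g (j+1) = trc g j ++ [g (trc g j)] from rfl,
        List.getD_append_right _ _ _ _ (by rw [trc_length])]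
      simp [trc_length]

lemma getD_take' (l : List Bool) {n i : ℕ} (h : i < n) :
    (l.take n).getD i false = l.getD i false := by
  rw [List.getD_eq_getElem?_getD, List.getD_eq_getElem?_getD, List.getElem?_take_of_lt h]

lemma core (F : Set (X → ℝ)) (hF : ∀ f ∈ F, ∀ x, f x = 0 ∨ f x = 1)
    (α : ℝ) (hα : 0 < α) (hα1 : α ≤ 1) (d : ℕ)
    (hno : ∀ x, ¬ BShatters F (d+1) x)
    (N : ℕ) (hSh : IsShattered (mixClass F) α N) (m : ℕ) (hm : 0 < m)
    (hcard : ((2:ℝ)^N) * (2 * Real.exp (-(m * α^2/64))) < 1) :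
    2^N ≤ (N*m+1)^d := by
  obtain ⟨P, s, hPs⟩ := hSh
  set εz : (Fin N → Bool) → ℕ → Bool :=
    fun ζ t => if h : t < N then ζ ⟨t, h⟩ else false with hεz
  have hchoice : ∀ ζ : Fin N → Bool, ∃ f, f ∈ F ∧ ∀ t (ht : t < N),
      (if ζ ⟨t, ht⟩ then Ep (P (pathPrefix (εz ζ) t)).1 f - s (pathPrefix (εz ζ) t)
        else s (pathPrefix (εz ζ) t) - Ep (P (pathPrefix (εz ζ) t)).1 f) ≥ α/2 := by
    intro ζ
    obtain ⟨g, ⟨f, hfF, hfg⟩, hgm⟩ := hPs (εz ζ)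
    refine ⟨f, hfF, ?_⟩
    intro t ht
    have h1 := hgm t ht
    have h2 : g (P (pathPrefix (εz ζ) t)) = Ep (P (pathPrefix (εz ζ) t)).1 f := by
      rw [hfg]; rfl
    rw [h2] at h1
    have h3 : εz ζ t = ζ ⟨t, ht⟩ := by rw [hεz]; simp [ht]
    rw [h3] at h1
    exact h1
  choose fz hfzF hfzM using hchoice
  have hsupp1 : ∀ w : List Bool, ∑ x ∈ (P w).1.support, (P w).1 x = 1 := by
    intro w
    have := (P w).2.2
    simpa [Finsupp.sum] using this
  have hsamp : ∀ w : List Bool, ∃ xs : Fin m → X,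
      ∀ ζ, |(∑ j, fz ζ (xs j))/m - Ep (P w).1 (fz ζ)| ≤ α/4 := by
    intro w
    apply good_sample (P w).1 (P w).2.1 (hsupp1 w) (Fin N → Bool) fz
      (fun ζ x => hF _ (hfzF ζ) x) α hα hα1 m hm
    rw [show ((Fintype.card (Fin N → Bool) : ℕ) : ℝ) = 2^N by
      rw [show Fintype.card (Fin N → Bool) = 2^N by simp]; push_cast; ring]
    exact hcard
  choose σ hσ using hsamp
  set avg : List Bool → ℕ → ℝ :=
    fun b k => (∑ j ∈ Finset.range m, (if b.getD (k*m+j) false then (1:ℝ) else 0))/m with havg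
  set bitf : List Bool → List Bool → ℕ → Bool :=
    fun b w k => decide (s w < avg b k) with hbitf
  set y : List Bool → X :=
    fun b => σ (Dec (bitf b) (b.length / m)) ⟨b.length % m, Nat.mod_lt _ hm⟩ with hy
  set gz : (Fin N → Bool) → List Bool → Bool :=
    fun ζ w => decide (fz ζ (y w) = 1) with hgz
  set B : (Fin N → Bool) → List Bool := fun ζ => trc (gz ζ) (N*m) with hB
  have avg_take : ∀ (b : List Bool) (j k : ℕ), (k+1)*m ≤ j →
      avg (b.take j) k = avg b k := by
    intro b j k hkj
    rw [havg]
    simp only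
    congr 1
    apply Finset.sum_congr rfl
    intro i hi
    rw [Finset.mem_range] at hi
    rw [getD_take' b (show k*m+i < j by
      have h1 : (k+1)*m = k*m + m := by ring
      omega)]
  have Dec_take : ∀ (b : List Bool) (j k : ℕ), k*m ≤ j →
      Dec (bitf (b.take j)) k = Dec (bitf b) k := by
    intro b j k hkj
    apply Dec_congr
    intro k' hk' w
    rw [hbitf]
    simp only
    rw [avg_take b j k' (by
      have h1 : (k'+1)*m ≤ k*m := Nat.mul_le_mul_right m (by omega)
      omega)]
  have Blen : ∀ ζ, (B ζ).length = N*m := fun ζ => trc_length _ _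
  have Btake : ∀ (ζ) {j : ℕ}, j ≤ N*m → (B ζ).take j = trc (gz ζ) j :=
    fun ζ j hj => trc_take _ hj
  have main : ∀ (ζ : Fin N → Bool) (k : ℕ), k ≤ N →
      Dec (bitf (B ζ)) k = pathPrefix (εz ζ) k := by
    intro ζ k
    induction k with
    | zero => intro _; rw [pathPrefix_zero]; rfl
    | succ k IH =>
      intro hk1
      have hkN : k < N := by omega
      have hw := IH (by omega)
      have hyj : ∀ (i : ℕ) (hi : i < m),
          y (trc (gz ζ) (k*m+i)) = σ (pathPrefix (εz ζ) k) ⟨i, hi⟩ := by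
        intro i hi
        have hlen : (trc (gz ζ) (k*m+i)).length = k*m+i := trc_length _ _
        have hdiv : (k*m+i) / m = k := by
          apply Nat.div_eq_of_lt_le (Nat.le_add_right _ _)
          have h1 : (k+1)*m = k*m + m := by ring
          omega
        have hmod : (k*m+i) % m = i := by
          rw [Nat.add_comm, Nat.add_mul_mod_self_right]
          exact Nat.mod_eq_of_lt hi
        have hkmi : k*m+i ≤ N*m := by
          have h1 : (k+1)*m ≤ N*m := Nat.mul_le_mul_right m (by omega)
          have h2 : (k+1)*m = k*m + m := by ring
          omega
        have ht : trc (gz ζ) (k*m+i) = (B ζ).take (k*m+i) := (Btake ζ hkmi).symm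
        have hidx : (⟨(trc (gz ζ) (k*m+i)).length % m, Nat.mod_lt _ hm⟩ : Fin m)
            = ⟨i, hi⟩ := by
          apply Fin.ext
          simp [hlen, hmod]
        calc y (trc (gz ζ) (k*m+i))
            = σ (Dec (bitf (trc (gz ζ) (k*m+i))) ((trc (gz ζ) (k*m+i)).length / m))
                ⟨(trc (gz ζ) (k*m+i)).length % m, Nat.mod_lt _ hm⟩ := rfl
          _ = σ (pathPrefix (εz ζ) k) ⟨i, hi⟩ := by
              rw [hidx, hlen, hdiv, ht, Dec_take (B ζ) _ k (Nat.le_add_right _ _), hw]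
      have hbit : ∀ (i : ℕ) (hi : i < m),
          (B ζ).getD (k*m+i) false
            = decide (fz ζ (σ (pathPrefix (εz ζ) k) ⟨i, hi⟩) = 1) := by
        intro i hi
        have hlt : k*m+i < N*m := by
          have h1 : (k+1)*m ≤ N*m := Nat.mul_le_mul_right m (by omega)
          have h2 : (k+1)*m = k*m + m := by ring
          omega
        simp only [hB]
        rw [trc_getD _ hlt]
        simp only [hgz]
        rw [hyj i hi]
      have havgk : avg (B ζ) k
          = (∑ j : Fin m, fz ζ (σ (pathPrefix (εz ζ) k) j))/m := by
        rw [havg]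
        simp only
        congr 1
        rw [← Fin.sum_univ_eq_sum_range
          (fun i => if (B ζ).getD (k*m+i) false then (1:ℝ) else 0)]
        apply Finset.sum_congr rfl
        intro i _
        rw [hbit i.1 i.2]
        rcases hF _ (hfzF ζ) (σ (pathPrefix (εz ζ) k) ⟨i.1, i.2⟩) with h|h <;>
          rw [h] <;> norm_num
      have hgood := hσ (pathPrefix (εz ζ) k) ζ
      have hmarg := hfzM ζ k hkN
      have habs := abs_le.mp hgood
      have hbitk : bitf (B ζ) (pathPrefix (εz ζ) k) k = ζ ⟨k, hkN⟩ := by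
        simp only [hbitf]
        rw [havgk]
        cases hζ : ζ ⟨k, hkN⟩
        · simp only [hζ, Bool.false_eq_true, if_false] at hmarg
          have hlt : (∑ j : Fin m, fz ζ (σ (pathPrefix (εz ζ) k) j))/m
              < s (pathPrefix (εz ζ) k) := by
            have := habs.2
            linarith
          simp [not_lt.mpr (le_of_lt hlt)]
        · simp only [hζ, if_true] at hmarg
          have hgt : s (pathPrefix (εz ζ) k)
              < (∑ j : Fin m, fz ζ (σ (pathPrefix (εz ζ) k) j))/m := by
            have := habs.1
            linarith
          simp [hgt]
      have hstep : Dec (bitf (B ζ)) (k+1)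
          = Dec (bitf (B ζ)) k ++ [bitf (B ζ) (Dec (bitf (B ζ)) k) k] := rfl
      rw [hstep, hw, hbitk, pathPrefix_snoc]
      have : εz ζ k = ζ ⟨k, hkN⟩ := by rw [hεz]; simp [hkN]
      rw [this]
  have hmem : ∀ ζ, B ζ ∈ RS F (N*m) y := by
    intro ζ
    refine ⟨Blen ζ, fz ζ, hfzF ζ, ?_⟩
    intro j hj
    rw [Blen ζ] at hj
    rw [Btake ζ (le_of_lt hj)]
    have hg : (B ζ).getD j false = gz ζ (trc (gz ζ) j) := trc_getD _ hj
    rw [hg]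
    simp only [hgz]
    rcases hF _ (hfzF ζ) (y (trc (gz ζ) j)) with h|h <;> rw [h] <;> norm_num
  have hinj : Function.Injective B := by
    intro ζ ζ' hbb
    have h1 := main ζ N le_rfl
    have h2 := main ζ' N le_rfl
    rw [hbb] at h1
    have h3 : pathPrefix (εz ζ) N = pathPrefix (εz ζ') N := by rw [← h1, ← h2]
    have h4 := List.ofFn_inj.mp h3
    funext i
    have h5 := congrFun h4 i
    simp only [hεz] at h5
    simpa [i.2] using h5
  have hcount : (2:ℕ)^N ≤ (RS F (N*m) y).ncard := by
    have h1 : (Set.range B).ncard = 2^N := by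
      rw [← Set.image_univ, Set.ncard_image_of_injective _ hinj, Set.ncard_univ,
        Nat.card_eq_fintype_card]
      simp
    have h2 : Set.range B ⊆ RS F (N*m) y := by
      rintro _ ⟨ζ, rfl⟩; exact hmem ζ
    calc (2:ℕ)^N = (Set.range B).ncard := h1.symm
      _ ≤ _ := Set.ncard_le_ncard h2 (RS_finite _ _ _)
  calc (2:ℕ)^N ≤ (RS F (N*m) y).ncard := hcount
    _ ≤ (N*m+1)^d := sauer_tree (N*m) F y d hno

end Assemble



lemma aux_ln2 : (2:ℝ)/3 ≤ Real.log 2 := by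
  have h1 : (Real.exp (2/3))^3 = Real.exp 2 := by rw [← Real.exp_nat_mul]; norm_num
  have he2 : Real.exp 2 < 8 := by
    have h3 : Real.exp 1 * Real.exp 1 = Real.exp 2 := by rw [← Real.exp_add]; norm_num
    nlinarith [Real.exp_one_lt_d9, Real.exp_pos 1]
  have hcube : Real.exp (2/3) < 2 := by
    nlinarith [Real.exp_pos (2/3), sq_nonneg (Real.exp (2/3) + 2),
      sq_nonneg (Real.exp (2/3) - 2)]
  exact le_of_lt ((Real.lt_log_iff_exp_lt (by norm_num)).mpr hcube)

lemma aux_log200 : (3:ℝ) ≤ Real.log 200 := by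
  have h1 : (Real.exp 1)^3 = Real.exp 3 := by rw [← Real.exp_nat_mul]; norm_num
  have h2 : (Real.exp 1)^3 < (2.7182818286:ℝ)^3 :=
    pow_lt_pow_left₀ Real.exp_one_lt_d9 (le_of_lt (Real.exp_pos 1)) (by norm_num)
  have h : Real.exp 3 < 200 := by rw [← h1]; nlinarith
  exact le_of_lt ((Real.lt_log_iff_exp_lt (by norm_num)).mpr h)

set_option maxHeartbeats 2000000 in
/-- there is a universal constant `C > 0` such that for any binary class
`F ⊆ {0,1}^X` with `Ldim(F) ≤ d` and any scale `α ∈ (0,1]`,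
`sfat_α(mix(F)) ≤ C·d·log(Cd/α)` (every depth `N` that `mix(F)` `α`-shatters satisfies
`N ≤ C·d·log(Cd/α)`). -/
theorem stmt16 : ∃ C : ℝ, 0 < C ∧
    ∀ (X : Type) (F : Set (X → ℝ)), (∀ f ∈ F, ∀ x, f x = 0 ∨ f x = 1) →
      ∀ α : ℝ, 0 < α → α ≤ 1 → ∀ d : ℕ, Ldim F ≤ (d : ℕ∞) →
        ∀ N : ℕ, IsShattered (mixClass F) α N →
          (N : ℝ) ≤ C * d * Real.log (C * d / α) := by
  refine ⟨200, by norm_num, ?_⟩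
  intro X F hF α hα hα1 d hLdim N hShat
  classical
  have hα2 : (0:ℝ) < α^2 := by positivity
  -- no binary-shattered tree of depth d+1
  have hno : ∀ x, ¬ BShatters F (d+1) x := by
    intro x hx
    have hmem : (((d+1 : ℕ)) : ℕ∞) ∈
        {n : ℕ∞ | ∃ d' : ℕ, n = (d' : ℕ∞) ∧ ∃ x, BShatters F d' x} :=
      ⟨d+1, rfl, x, hx⟩
    have h1 : (((d+1:ℕ)) : ℕ∞) ≤ Ldim F := le_sSup hmem
    have hle : (((d+1:ℕ)) : ℕ∞) ≤ (d : ℕ∞) := le_trans h1 hLdim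
    rw [Nat.cast_le] at hle
    omega
  -- sample size
  set m : ℕ := ⌈64*((N:ℝ)+1)/α^2⌉₊ with hmdef
  have hm : 0 < m := Nat.ceil_pos.mpr (by positivity)
  have hmge : 64*((N:ℝ)+1)/α^2 ≤ m := Nat.le_ceil _
  have hcard : ((2:ℝ)^N) * (2 * Real.exp (-(m * α^2/64))) < 1 := by
    have h1 : ((N:ℝ)+1) ≤ m*α^2/64 := by
      rw [div_le_iff₀ hα2] at hmge
      rw [le_div_iff₀ (show (0:ℝ) < 64 by norm_num)]
      linarith
    have h2 : Real.exp (-(m*α^2/64)) ≤ Real.exp (-((N:ℝ)+1)) :=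
      Real.exp_le_exp.mpr (by linarith)
    have he : (2:ℝ) < Real.exp 1 := by
      have := Real.exp_one_gt_d9
      linarith
    have hpow : (2:ℝ)^(N+1) < (Real.exp 1)^(N+1) :=
      pow_lt_pow_left₀ he (by norm_num) (Nat.succ_ne_zero N)
    have hexp : (Real.exp 1)^(N+1) = Real.exp ((N:ℝ)+1) := by
      rw [← Real.exp_nat_mul]
      push_cast
      ring_nf
    have h3 : (2:ℝ)^N * (2 * Real.exp (-((N:ℝ)+1))) < 1 := by
      have h4 : (2:ℝ)^N * (2 * Real.exp (-((N:ℝ)+1)))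
          = 2^(N+1) * (Real.exp ((N:ℝ)+1))⁻¹ := by
        rw [Real.exp_neg]; ring
      rw [h4, ← div_eq_mul_inv, div_lt_one (Real.exp_pos _), ← hexp]
      exact hpow
    have h5 : (0:ℝ) ≤ (2:ℝ)^N * 2 := by positivity
    nlinarith [Real.exp_pos (-((m:ℝ)*α^2/64)), Real.exp_pos (-((N:ℝ)+1))]
  have hmain : 2^N ≤ (N*m+1)^d := core F hF α hα hα1 d hno N hShat m hm hcard
  rcases Nat.eq_zero_or_pos d with hd0 | hd1
  · -- d = 0 : then N = 0 and RHS = 0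
    subst hd0
    have hN0 : N = 0 := by
      rcases Nat.eq_zero_or_pos N with h | h
      · exact h
      · exfalso
        have h2 : 2^1 ≤ 2^N := Nat.pow_le_pow_right (by norm_num) h
        simp only [pow_zero] at hmain
        omega
    subst hN0
    simp
  · -- d ≥ 1
    have hdR : (1:ℝ) ≤ d := by exact_mod_cast hd1
    have hdpos : (0:ℝ) < d := by linarith
    have hN0 : (0:ℝ) ≤ (N:ℝ) := Nat.cast_nonneg N
    set u : ℝ := ((N:ℝ)+1)^2/α^2 with hu
    have hu1 : (1:ℝ) ≤ u := by
      rw [hu, le_div_iff₀ hα2]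
      nlinarith
    have hmub : (m:ℝ) ≤ 65*((N:ℝ)+1)/α^2 := by
      have hlt : (m:ℝ) < 64*((N:ℝ)+1)/α^2 + 1 := by
        rw [hmdef]
        exact Nat.ceil_lt_add_one (by positivity)
      have h1α : (1:ℝ) ≤ ((N:ℝ)+1)/α^2 := by
        rw [le_div_iff₀ hα2]
        nlinarith
      have h2 : 64*((N:ℝ)+1)/α^2 + ((N:ℝ)+1)/α^2 = 65*((N:ℝ)+1)/α^2 := by ring
      linarith
    have hNm : (N:ℝ)*m ≤ 65*u := by
      have h1 : (N:ℝ)*m ≤ (N:ℝ)*(65*((N:ℝ)+1)/α^2) :=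
        mul_le_mul_of_nonneg_left hmub hN0
      have h2 : (N:ℝ)*(65*((N:ℝ)+1)/α^2) ≤ 65*u := by
        rw [hu, show (N:ℝ)*(65*((N:ℝ)+1)/α^2) = ((N:ℝ)*(65*((N:ℝ)+1)))/α^2 by ring,
          show (65:ℝ)*(((N:ℝ)+1)^2/α^2) = (65*((N:ℝ)+1)^2)/α^2 by ring]
        apply (div_le_div_iff_of_pos_right hα2).mpr
        nlinarith
      linarith
    have hLub : (N:ℝ)*m+1 ≤ 66*u := by linarith
    have hLpos : (0:ℝ) ≤ (N:ℝ)*m+1 := by positivity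
    have hmainR : (2:ℝ)^N ≤ ((N:ℝ)*m+1)^d := by
      have h := (Nat.cast_le (α := ℝ)).mpr hmain
      push_cast at h
      exact h
    have hbase : (0:ℝ) < 66*u := by linarith
    have hlog1 : (N:ℝ) * Real.log 2 ≤ d * Real.log (66*u) := by
      calc (N:ℝ) * Real.log 2 = Real.log ((2:ℝ)^N) := by rw [Real.log_pow]
        _ ≤ Real.log ((66*u)^d) := by
            apply Real.log_le_log (by positivity)
            calc (2:ℝ)^N ≤ ((N:ℝ)*m+1)^d := hmainR
              _ ≤ (66*u)^d := pow_le_pow_left₀ hLpos hLub d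
        _ = d * Real.log (66*u) := by rw [Real.log_pow]
    have hNpos1 : (0:ℝ) < (N:ℝ)+1 := by positivity
    have hlogexp : Real.log (66*u)
        = Real.log 66 + 2*Real.log ((N:ℝ)+1) - 2*Real.log α := by
      rw [hu, show (66:ℝ)*(((N:ℝ)+1)^2/α^2) = (66*((N:ℝ)+1)^2)/α^2 by ring,
        Real.log_div (by positivity) (by positivity),
        Real.log_mul (by norm_num) (by positivity), Real.log_pow, Real.log_pow]
      push_cast
      ring
    have hlog66 : Real.log 66 ≤ 65 := by
      have := Real.log_le_sub_one_of_pos (show (0:ℝ) < 66 by norm_num)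
      linarith
    have hlog12 : Real.log 12 ≤ 11 := by
      have := Real.log_le_sub_one_of_pos (show (0:ℝ) < 12 by norm_num)
      linarith
    have hlogd0 : 0 ≤ Real.log d := Real.log_nonneg hdR
    have hloga0 : Real.log α ≤ 0 := Real.log_nonpos (le_of_lt hα) hα1
    have hlogN : Real.log ((N:ℝ)+1) ≤ ((N:ℝ)+1)/(12*d) + Real.log 12 + Real.log d := by
      have h12 : (0:ℝ) < 12*(d:ℝ) := by positivity
      have hq := Real.log_le_sub_one_of_pos (show (0:ℝ) < ((N:ℝ)+1)/(12*d) by positivity)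
      rw [Real.log_div (by positivity) (ne_of_gt h12)] at hq
      have h12d : Real.log (12*(d:ℝ)) = Real.log 12 + Real.log d :=
        Real.log_mul (by norm_num) (by positivity)
      rw [h12d] at hq
      linarith
    have hln2 : (2:ℝ)/3 ≤ Real.log 2 := aux_ln2
    have hlog200 : (3:ℝ) ≤ Real.log 200 := aux_log200
    -- assemble
    have hNln2 : (N:ℝ)*(2/3) ≤ (N:ℝ)*Real.log 2 :=
      mul_le_mul_of_nonneg_left hln2 hN0
    have hB : (N:ℝ)*Real.log 2
        ≤ d*Real.log 66 + 2*(d*Real.log ((N:ℝ)+1)) - 2*(d*Real.log α) := by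
      rw [hlogexp] at hlog1
      nlinarith [hlog1]
    have hC := mul_le_mul_of_nonneg_left hlogN (show (0:ℝ) ≤ 2*(d:ℝ) by positivity)
    have hC' : 2*(d:ℝ)*(((N:ℝ)+1)/(12*d) + Real.log 12 + Real.log d)
        = ((N:ℝ)+1)/6 + 2*(d*Real.log 12) + 2*(d*Real.log d) := by
      field_simp
      ring
    rw [hC'] at hC
    have hD66 : (d:ℝ)*Real.log 66 ≤ d*65 :=
      mul_le_mul_of_nonneg_left hlog66 (le_of_lt hdpos)
    have hD12 : (d:ℝ)*Real.log 12 ≤ d*11 :=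
      mul_le_mul_of_nonneg_left hlog12 (le_of_lt hdpos)
    have hkey : (N:ℝ) ≤ 175*d + 4*(d*Real.log d) - 4*(d*Real.log α) := by
      linarith
    have hlogrhs : Real.log (200*(d:ℝ)/α) = Real.log 200 + Real.log d - Real.log α := by
      rw [Real.log_div (by positivity) (ne_of_gt hα),
        Real.log_mul (by norm_num) (by positivity)]
    rw [hlogrhs]
    have e1 : 200*(d:ℝ)*3 ≤ 200*d*Real.log 200 :=
      mul_le_mul_of_nonneg_left hlog200 (by positivity)
    have e2 : 0 ≤ (d:ℝ)*Real.log d := mul_nonneg (le_of_lt hdpos) hlogd0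
    have e3 : 0 ≤ (d:ℝ)*(-Real.log α) :=
      mul_nonneg (le_of_lt hdpos) (neg_nonneg.mpr hloga0)
    nlinarith [hkey, e1, e2, e3]
end

section
/- Let ω_{E,t} and ω_{E,t+1} be the weights of Optimistic Exponential Weights over a finite expert set E with step size η ∈ (0, 1/4] and losses in [0,1], i.e., ω_{E,t+1} ∝ ω_{E,t}·exp(−η(2ℓ_t(E) − ℓ_{t−1}(E))). Then Σ_E |ω_{E,t} − ω_{E,t+1}| ≤ 5η. -/
lemma exp34_le : Real.exp (3/4) ≤ 9/4 := by
  have h1 := Real.exp_one_lt_d9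
  have hp : Real.exp (3/4) > 0 := Real.exp_pos _
  have e4 : Real.exp (3/4) ^ 4 = Real.exp 1 ^ 3 := by
    rw [← Real.exp_nat_mul, ← Real.exp_nat_mul]; norm_num
  have h3 : Real.exp 1 ^ 3 < (2.7182818286:ℝ)^3 :=
    pow_lt_pow_left₀ h1 (Real.exp_pos 1).le (by norm_num)
  by_contra hcon
  push_neg at hcon
  have h4 : (9/4:ℝ)^4 < Real.exp (3/4) ^ 4 :=
    pow_lt_pow_left₀ hcon (by norm_num) (by norm_num)
  rw [e4] at h4
  norm_num at h3 h4
  linarith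

lemma exp_3eta_le (η : ℝ) (hη0 : 0 < η) (hη1 : η ≤ 1 / 4) :
    Real.exp (3 * η) ≤ 1 + 5 * η := by
  have hconv := convexOn_exp.2 (Set.mem_univ (0:ℝ)) (Set.mem_univ ((3:ℝ)/4))
    (show (0:ℝ) ≤ 1 - 4*η by linarith) (show (0:ℝ) ≤ 4*η by linarith) (by ring)
  simp only [smul_eq_mul, mul_zero, zero_add, Real.exp_zero] at hconv
  have h5 : 4*η * (3/4) = 3 * η := by ring
  rw [h5] at hconv
  have := exp34_le
  nlinarith

/-- one step of Optimistic Exponential Weights with step size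
`η ∈ (0, 1/4]` and losses in `[0,1]` moves the weight vector by at most `5η` in `ℓ₁`:
`Σ_E |ω_{E,t} − ω_{E,t+1}| ≤ 5η` where
`ω_{E,t+1} ∝ ω_{E,t}·exp(−η(2ℓ_t(E) − ℓ_{t−1}(E)))`. -/
theorem stmt18 {E : Type*} [Fintype E] (η : ℝ) (hη0 : 0 < η) (hη1 : η ≤ 1 / 4)
    (ω : E → ℝ) (hω0 : ∀ e, 0 ≤ ω e) (hω1 : ∑ e, ω e = 1)
    (ℓt ℓp : E → ℝ)
    (hℓt : ∀ e, ℓt e ∈ Set.Icc (0:ℝ) 1) (hℓp : ∀ e, ℓp e ∈ Set.Icc (0:ℝ) 1) :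
    ∑ e, |ω e -
        ω e * Real.exp (-η * (2 * ℓt e - ℓp e)) /
          (∑ e', ω e' * Real.exp (-η * (2 * ℓt e' - ℓp e')))| ≤ 5 * η := by
  set f : E → ℝ := fun e => Real.exp (-η * (2 * ℓt e - ℓp e)) with hf
  set S : ℝ := ∑ e', ω e' * f e' with hS
  have hf_lo : ∀ e, Real.exp (-(2*η)) ≤ f e := by
    intro e
    apply Real.exp_le_exp.2
    have h1 := (hℓt e).2
    have h2 := (hℓp e).1
    nlinarith
  have hf_hi : ∀ e, f e ≤ Real.exp η := by
    intro e
    apply Real.exp_le_exp.2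
    have h1 := (hℓt e).1
    have h2 := (hℓp e).2
    nlinarith
  have hS_lo : Real.exp (-(2*η)) ≤ S := by
    calc Real.exp (-(2*η)) = ∑ e, ω e * Real.exp (-(2*η)) := by
          rw [← Finset.sum_mul, hω1, one_mul]
      _ ≤ S := Finset.sum_le_sum fun e _ =>
          mul_le_mul_of_nonneg_left (hf_lo e) (hω0 e)
  have hS_hi : S ≤ Real.exp η := by
    calc S ≤ ∑ e, ω e * Real.exp η := Finset.sum_le_sum fun e _ =>
          mul_le_mul_of_nonneg_left (hf_hi e) (hω0 e)
      _ = Real.exp η := by rw [← Finset.sum_mul, hω1, one_mul]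
  have hS_pos : 0 < S := lt_of_lt_of_le (Real.exp_pos _) hS_lo
  have key : ∀ e, |ω e - ω e * f e / S| ≤ ω e * (Real.exp (3*η) - 1) := by
    intro e
    have h1 : ω e - ω e * f e / S = ω e * (1 - f e / S) := by ring
    rw [h1, abs_mul, abs_of_nonneg (hω0 e)]
    apply mul_le_mul_of_nonneg_left _ (hω0 e)
    rw [abs_le]
    have hr_hi : f e / S ≤ Real.exp (3*η) := by
      rw [div_le_iff₀ hS_pos]
      calc f e ≤ Real.exp η := hf_hi e
        _ = Real.exp (3*η) * Real.exp (-(2*η)) := by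
            rw [← Real.exp_add]; ring_nf
        _ ≤ Real.exp (3*η) * S :=
            mul_le_mul_of_nonneg_left hS_lo (Real.exp_pos _).le
    have hr_lo : Real.exp (-(3*η)) ≤ f e / S := by
      rw [le_div_iff₀ hS_pos]
      calc Real.exp (-(3*η)) * S ≤ Real.exp (-(3*η)) * Real.exp η :=
            mul_le_mul_of_nonneg_left hS_hi (Real.exp_pos _).le
        _ = Real.exp (-(2*η)) := by rw [← Real.exp_add]; ring_nf
        _ ≤ f e := hf_lo e
    have h2 : Real.exp (-(3*η)) = (Real.exp (3*η))⁻¹ := by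
      rw [← Real.exp_neg]
    have hE1 : 1 ≤ Real.exp (3*η) := Real.one_le_exp (by linarith)
    constructor
    · nlinarith
    · have : 2 - Real.exp (3*η) ≤ Real.exp (-(3*η)) := by
        rw [h2]
        have hp : 0 < Real.exp (3*η) := Real.exp_pos _
        nlinarith [mul_inv_cancel₀ (ne_of_gt hp), sq_nonneg (Real.exp (3*η) - 1),
          inv_pos.2 hp]
      linarith
  calc ∑ e, |ω e - ω e * f e / S| ≤ ∑ e, ω e * (Real.exp (3*η) - 1) :=
        Finset.sum_le_sum fun e _ => key e
    _ = Real.exp (3*η) - 1 := by rw [← Finset.sum_mul, hω1, one_mul]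
    _ ≤ 5 * η := by linarith [exp_3eta_le η hη0 hη1]
end
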